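/- arXiv:1805.06315 — 2 statements merged into one kernel-verified Lean document; each statement's English description precedes it below -/
import Mathlib

section
/- For an update flow network with exactly two update flow pairs, each forming a DAG, a feasible update sequence exists if and only if the dependency graph of its blocks is acyclic. -/
/-!
A formal model of congestion-free flow rerouting (network update scheduling).
An update flow network consists of a source `s`, a terminal `t`, edge
capacities, and `k` update flow pairs, each given by an old `s`-`t` path and
an update (new) `s`-`t` path (represented as lists of vertices) with a demand.
An update sequence assigns to every update `(v, i)` (vertex `v`, pair `i`) a
round; it is feasible if resolving all updates of earlier rounds together with
any subset of the current round always leaves, for every pair, a unique valid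
(capacity-respecting) transient `s`-`t` path among the active edges, and the
family of transient paths jointly respects the capacities.
-/

namespace FlowUpdate

variable {V : Type} [DecidableEq V] {k : ℕ}

/-- The edges of a path given as a list of vertices. -/
def edgesOf (p : List V) : List (V × V) := p.zip p.tail

/-- The subpath of `p` from vertex `a` to vertex `z` (inclusive). -/
def segment (p : List V) (a z : V) : List V :=
  ((p.dropWhile (fun v => decide (v ≠ a))).takeWhile (fun v => decide (v ≠ z))) ++ [z]

section ListLemmas
set_option linter.unusedSectionVars false

theorem edgesOf_nil : edgesOf ([] : List V) = [] := rfl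
theorem edgesOf_single (x : V) : edgesOf [x] = [] := rfl
theorem edgesOf_cons₂ (x y : V) (l : List V) :
    edgesOf (x :: y :: l) = (x, y) :: edgesOf (y :: l) := rfl

theorem mem_edgesOf_iff {e : V × V} : ∀ {l : List V},
    e ∈ edgesOf l ↔ ∃ l₁ l₂, l = l₁ ++ e.1 :: e.2 :: l₂ := by
  intro l
  induction l with
  | nil => simp [edgesOf_nil]
  | cons x l ih =>
    cases l with
    | nil =>
      simp only [edgesOf_single, List.not_mem_nil, false_iff]
      rintro ⟨l₁, l₂, h⟩
      rcases l₁ with _ | ⟨y, l₁⟩ <;> simp_all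
    | cons y l =>
      rw [edgesOf_cons₂, List.mem_cons, ih]
      constructor
      · rintro (h | ⟨l₁, l₂, h⟩)
        · exact ⟨[], l, by simp [Prod.ext_iff] at h; simp [h.1, h.2]⟩
        · exact ⟨x :: l₁, l₂, by simp [h]⟩
      · rintro ⟨l₁, l₂, h⟩
        rcases l₁ with _ | ⟨w, l₁⟩
        · left; simp at h; simp [h.1, h.2.1, Prod.ext_iff]
        · right
          simp only [List.cons_append, List.cons.injEq] at h
          exact ⟨l₁, l₂, h.2⟩

theorem edgesOf_decomp {e : V × V} {l : List V} (h : e ∈ edgesOf l) :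
    ∃ l₁ l₂, l = l₁ ++ e.1 :: e.2 :: l₂ := mem_edgesOf_iff.1 h

theorem edge_mem_of_decomp {a b : V} (l₁ l₂ : List V) :
    (a, b) ∈ edgesOf (l₁ ++ a :: b :: l₂) :=
  mem_edgesOf_iff.2 ⟨l₁, l₂, rfl⟩

theorem chain'_iff_edges {r : V → V → Prop} : ∀ {l : List V},
    List.Chain' r l ↔ ∀ e ∈ edgesOf l, r e.1 e.2 := by
  intro l
  induction l with
  | nil => simp [edgesOf_nil, List.Chain']
  | cons x l ih =>
    cases l with
    | nil => simp [edgesOf_single, List.Chain']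
    | cons y l =>
      simp only [List.Chain'] at ih ⊢
      rw [List.isChain_cons_cons, edgesOf_cons₂]
      simp only [List.mem_cons, forall_eq_or_imp]
      rw [ih]

theorem edge_fst_mem {e : V × V} {l : List V} (h : e ∈ edgesOf l) : e.1 ∈ l := by
  obtain ⟨l₁, l₂, rfl⟩ := edgesOf_decomp h; simp

theorem edge_snd_mem {e : V × V} {l : List V} (h : e ∈ edgesOf l) : e.2 ∈ l := by
  obtain ⟨l₁, l₂, rfl⟩ := edgesOf_decomp h; simp

theorem edge_fst_mem_dropLast {e : V × V} : ∀ {l : List V}, e ∈ edgesOf l →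
    e.1 ∈ l.dropLast := by
  intro l h
  induction l with
  | nil => simp [edgesOf_nil] at h
  | cons x l ih =>
    cases l with
    | nil => simp [edgesOf_single] at h
    | cons y l =>
      rw [edgesOf_cons₂, List.mem_cons] at h
      rcases h with h | h
      · simp [Prod.ext_iff] at h
        simp [h.1]
      · have := ih h
        simp only [List.dropLast_cons₂, List.mem_cons]
        right; exact this

theorem edges_infix {m l₁ l₂ : List V} :
    ∀ e ∈ edgesOf m, e ∈ edgesOf (l₁ ++ m ++ l₂) := by
  intro e he
  obtain ⟨m₁, m₂, rfl⟩ := edgesOf_decomp he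
  refine mem_edgesOf_iff.2 ⟨l₁ ++ m₁, m₂ ++ l₂, by simp⟩

theorem edges_append (xs : List V) (y : V) (ys : List V) :
    edgesOf (xs ++ y :: ys) = edgesOf (xs ++ [y]) ++ edgesOf (y :: ys) := by
  induction xs with
  | nil => simp [edgesOf_single]
  | cons x xs ih =>
    cases xs with
    | nil => simp [edgesOf_cons₂, edgesOf_single]
    | cons x' xs =>
      simp only [List.cons_append, edgesOf_cons₂] at *
      rw [ih]

theorem next_unique {l : List V} (hnd : l.Nodup) {u w w' : V}
    (h1 : (u, w) ∈ edgesOf l) (h2 : (u, w') ∈ edgesOf l) : w = w' := by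
  induction l with
  | nil => simp [edgesOf_nil] at h1
  | cons x l ih =>
    cases l with
    | nil => simp [edgesOf_single] at h1
    | cons y l =>
      rw [edgesOf_cons₂, List.mem_cons] at h1 h2
      have hx : x ∉ y :: l := (List.nodup_cons.1 hnd).1
      rcases h1 with h1 | h1 <;> rcases h2 with h2 | h2
      · simp [Prod.ext_iff] at h1 h2; rw [h1.2, h2.2]
      · exfalso; simp [Prod.ext_iff] at h1; exact hx (h1.1 ▸ edge_fst_mem h2)
      · exfalso; simp [Prod.ext_iff] at h2; exact hx (h2.1 ▸ edge_fst_mem h1)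
      · exact ih (List.nodup_cons.1 hnd).2 h1 h2

theorem exists_out {l : List V} {u t : V} (hu : u ∈ l) (hl : l.getLast? = some t)
    (hne : u ≠ t) : ∃ w, (u, w) ∈ edgesOf l := by
  obtain ⟨l₁, l₂, rfl⟩ := List.append_of_mem hu
  cases l₂ with
  | nil =>
    exfalso
    rw [List.getLast?_append] at hl
    simp at hl; exact hne hl
  | cons w l₂ => exact ⟨w, edge_mem_of_decomp _ _⟩

theorem sub2 {a b : V} : ∀ {l : List V}, List.Sublist [a, b] l →
    ∃ l₁ l₂ l₃, l = l₁ ++ a :: l₂ ++ b :: l₃ := by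
  intro l h
  induction l with
  | nil => simp at h
  | cons x l ih =>
    cases h with
    | cons _ h =>
      obtain ⟨l₁, l₂, l₃, rfl⟩ := ih h
      exact ⟨x :: l₁, l₂, l₃, rfl⟩
    | cons_cons _ h =>
      have hb : b ∈ l := h.subset (by simp)
      obtain ⟨l₂, l₃, rfl⟩ := List.append_of_mem hb
      exact ⟨[], l₂, l₃, rfl⟩

theorem mem2 {ord : V → ℕ} {l : List V} (hp : l.Pairwise (fun u v => ord u < ord v))
    {a z : V} (ha : a ∈ l) (hz : z ∈ l) (hlt : ord a < ord z) :
    ∃ l₁ l₂ l₃, l = l₁ ++ a :: l₂ ++ z :: l₃ := by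
  obtain ⟨p₁, p₂, rfl⟩ := List.append_of_mem ha
  rw [List.pairwise_append] at hp
  rcases List.mem_append.1 hz with hz | hz
  · exact absurd (hp.2.2 z hz a (by simp)) (by omega)
  · rcases List.mem_cons.1 hz with rfl | hz
    · omega
    · obtain ⟨q₁, q₂, rfl⟩ := List.append_of_mem hz
      exact ⟨p₁, q₁, q₂, by simp⟩

theorem not_between {ord : V → ℕ} {l m₁ m₂ : List V} {a z v : V}
    (hp : l.Pairwise (fun u v => ord u < ord v))
    (hdec : l = m₁ ++ a :: z :: m₂) (hv : v ∈ l)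
    (h1 : ord a < ord v) (h2 : ord v < ord z) : False := by
  subst hdec
  rw [List.pairwise_append] at hp
  rcases List.mem_append.1 hv with hv | hv
  · have := hp.2.2 v hv a (by simp); omega
  · rcases List.mem_cons.1 hv with rfl | hv
    · omega
    · rcases List.mem_cons.1 hv with rfl | hv
      · omega
      · have := (List.pairwise_cons.1 (List.pairwise_cons.1 hp.2.1).2).1 v hv; omega

theorem pairwise_ne_of_lt {ord : V → ℕ} {l : List V}
    (hp : l.Pairwise (fun u v => ord u < ord v)) : l.Nodup :=
  hp.imp fun h => by rintro rfl; omega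

theorem mem_last_or_lt {ord : V → ℕ} {l : List V} {t v : V}
    (hp : l.Pairwise (fun u v => ord u < ord v))
    (hl : l.getLast? = some t) (hv : v ∈ l) : v = t ∨ ord v < ord t := by
  obtain ⟨l', rfl⟩ : ∃ l', l = l' ++ [t] := by
    cases l with
    | nil => simp at hl
    | cons x l =>
      refine ⟨(x :: l).dropLast, ?_⟩
      have h1 : (x :: l).getLast (by simp) = t :=
        Option.some.inj ((List.getLast?_eq_getLast (l := x :: l) (by simp)).symm.trans hl)
      conv_lhs => rw [← List.dropLast_append_getLast (l := x :: l) (by simp), h1]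
  rw [List.pairwise_append] at hp
  rcases List.mem_append.1 hv with hv | hv
  · exact Or.inr (hp.2.2 v hv t (by simp))
  · simp at hv; exact Or.inl hv

theorem dropWhile_ne_append {a : V} (l r : List V) (h : ∀ v ∈ l, v ≠ a) :
    (l ++ a :: r).dropWhile (fun v => decide (v ≠ a)) = a :: r := by
  induction l with
  | nil => simp [List.dropWhile_cons]
  | cons x l ih =>
    have hx : x ≠ a := h x (by simp)
    rw [List.cons_append, List.dropWhile_cons, if_pos (by simp [hx]),
      ih fun v hv => h v (by simp [hv])]

theorem takeWhile_ne_append {z : V} (l r : List V) (h : ∀ v ∈ l, v ≠ z) :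
    (l ++ z :: r).takeWhile (fun v => decide (v ≠ z)) = l := by
  induction l with
  | nil => simp [List.takeWhile_cons]
  | cons x l ih =>
    have hx : x ≠ z := h x (by simp)
    rw [List.cons_append, List.takeWhile_cons, if_pos (by simp [hx]),
      ih fun v hv => h v (by simp [hv])]

theorem segment_eq {p : List V} (hnd : p.Nodup) {a z : V} {l₁ l₂ l₃ : List V}
    (hdec : p = l₁ ++ a :: l₂ ++ z :: l₃) :
    segment p a z = a :: l₂ ++ [z] := by
  have hnd' : (l₁ ++ a :: (l₂ ++ z :: l₃)).Nodup := by
    rw [hdec] at hnd; simpa using hnd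
  rw [List.nodup_append] at hnd'
  have ha1 : ∀ v ∈ l₁, v ≠ a := by
    intro v hv; rintro rfl
    exact hnd'.2.2 _ hv _ (by simp) rfl
  have hnd₂ : ((a :: l₂) ++ z :: l₃).Nodup := by simpa using hnd'.2.1
  rw [List.nodup_append] at hnd₂
  have hz1 : ∀ v ∈ a :: l₂, v ≠ z := by
    intro v hv; rintro rfl
    exact hnd₂.2.2 _ hv _ (by simp) rfl
  unfold segment
  rw [hdec, show l₁ ++ a :: l₂ ++ z :: l₃ = l₁ ++ a :: (l₂ ++ z :: l₃) by simp,
    dropWhile_ne_append _ _ ha1,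
    show a :: (l₂ ++ z :: l₃) = (a :: l₂) ++ z :: l₃ by simp,
    takeWhile_ne_append _ _ hz1]

end ListLemmas

/-- The outgoing edge of `v` on the path `p`, if any. -/
def outEdge (p : List V) (v : V) : Option (V × V) :=
  (edgesOf p).find? (fun e => decide (e.1 = v))

/-- An update flow network with `k` update flow pairs. -/
structure UFN (V : Type) (k : ℕ) where
  s : V
  t : V
  cap : V → V → ℕ
  old : Fin k → List V
  new : Fin k → List V
  demand : Fin k → ℕ

namespace UFN

/-- After resolving the set of updates `U`, edge `e` is active for pair `i` iff
it is an old edge whose tail is not yet updated, or a new edge whose tail is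
updated. -/
def active (G : UFN V k) (U : Set (V × Fin k)) (i : Fin k) (e : V × V) : Prop :=
  (e ∈ edgesOf (G.old i) ∧ (e.1, i) ∉ U) ∨ (e ∈ edgesOf (G.new i) ∧ (e.1, i) ∈ U)

/-- `p` is a simple `s`-`t` path all of whose edges satisfy `E`. -/
def IsPathIn (E : V × V → Prop) (s t : V) (p : List V) : Prop :=
  p.head? = some s ∧ p.getLast? = some t ∧ List.Chain' (fun u v => E (u, v)) p ∧ p.Nodup

/-- `p` respects the capacities for the demand of pair `i`. -/
def ValidPath (G : UFN V k) (i : Fin k) (p : List V) : Prop :=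
  ∀ e ∈ edgesOf p, G.demand i ≤ G.cap e.1 e.2

/-- `T` is the unique valid transient path of pair `i` after resolving `U`. -/
def TransientPair (G : UFN V k) (U : Set (V × Fin k)) (i : Fin k) (T : List V) : Prop :=
  IsPathIn (G.active U i) G.s G.t T ∧ G.ValidPath i T ∧
    ∀ p, IsPathIn (G.active U i) G.s G.t p → G.ValidPath i p → p = T

/-- After resolving `U`, every pair has a unique valid transient path, and the
family of transient paths jointly respects the capacities. -/
def TransientFamily (G : UFN V k) (U : Set (V × Fin k)) : Prop :=
  ∃ T : Fin k → List V,
    (∀ i, G.TransientPair U i (T i)) ∧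
    (∀ u v : V, (∑ i : Fin k, if (u, v) ∈ edgesOf (T i) then G.demand i else 0) ≤ G.cap u v)

/-- An update sequence (an assignment of rounds to all updates) is feasible if
after resolving all updates of rounds `< r` together with any subset of the
updates of round `r`, all pairs admit a transient family. -/
def Feasible (G : UFN V k) (R : V × Fin k → ℕ) : Prop :=
  ∀ r : ℕ, ∀ S : Set (V × Fin k), (∀ u ∈ S, R u = r) →
    G.TransientFamily ({u | R u < r} ∪ S)

/-- `p` is a simple path from the source to the terminal. -/
def IsStPath (G : UFN V k) (p : List V) : Prop :=
  p.head? = some G.s ∧ p.getLast? = some G.t ∧ p.Nodup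

/-- Well-formedness of an update flow network: all old and new flows are simple
`s`-`t` paths, each pair forms a DAG, each new path respects capacities for its
own demand, and both the old family and the new family jointly respect the
capacities. -/
def WellFormed (G : UFN V k) : Prop :=
  (∀ i, G.IsStPath (G.old i) ∧ G.IsStPath (G.new i)) ∧
  (∀ i, ∃ ord : V → ℕ, ∀ e ∈ edgesOf (G.old i) ++ edgesOf (G.new i), ord e.1 < ord e.2) ∧
  (∀ i, G.ValidPath i (G.new i)) ∧
  (∀ u v : V, (∑ i : Fin k, if (u, v) ∈ edgesOf (G.old i) then G.demand i else 0) ≤ G.cap u v) ∧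
  (∀ u v : V, (∑ i : Fin k, if (u, v) ∈ edgesOf (G.new i) then G.demand i else 0) ≤ G.cap u v)

/-- The common vertices of the old and new path of pair `i`, in path order. -/
def commons (G : UFN V k) (i : Fin k) : List V :=
  (G.old i).filter (fun v => decide (v ∈ G.new i))

/-- A block of pair `i` is a pair `(a, z)` of consecutive common vertices of the
old and new paths of `i`. -/
def IsBlock (G : UFN V k) (i : Fin k) (b : V × V) : Prop :=
  b ∈ edgesOf (G.commons i)

/-- A (candidate) block: a pair index together with its start and end vertices. -/
abbrev Blk (V : Type) (k : ℕ) := Fin k × V × V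

def IsBlk (G : UFN V k) (b : Blk V k) : Prop := G.IsBlock b.1 b.2

/-- The old-path segment of a block. -/
def blkOldSeg (G : UFN V k) (b : Blk V k) : List V := segment (G.old b.1) b.2.1 b.2.2

/-- The update-path segment of a block. -/
def blkNewSeg (G : UFN V k) (b : Blk V k) : List V := segment (G.new b.1) b.2.1 b.2.2

/-- Block `b1` depends on block `b2` (written `b1 → b2`) if they belong to
different pairs and some edge lies on `b1`'s update path and on `b2`'s old path
with capacity less than the sum of the two demands. -/
def Dep (G : UFN V k) (b1 b2 : Blk V k) : Prop :=
  G.IsBlk b1 ∧ G.IsBlk b2 ∧ b1.1 ≠ b2.1 ∧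
  ∃ e : V × V, e ∈ edgesOf (G.blkNewSeg b1) ∧ e ∈ edgesOf (G.blkOldSeg b2) ∧
    G.cap e.1 e.2 < G.demand b1.1 + G.demand b2.1

/-- The dependency graph contains a directed cycle. -/
def HasDepCycle (G : UFN V k) : Prop := ∃ b : Blk V k, Relation.TransGen G.Dep b b

/-- The number of rounds used by an update sequence. -/
def numRounds [Fintype V] (R : V × Fin k → ℕ) : ℕ :=
  (Finset.image R Finset.univ).card

/-- An update `(v, i)` is empty if `v`'s outgoing old edge and outgoing new edge
for pair `i` coincide (in particular if `v` has no outgoing edge for pair `i`). -/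
def EmptyUpd (G : UFN V k) (u : V × Fin k) : Prop :=
  outEdge (G.old u.2) u.1 = outEdge (G.new u.2) u.1

instance (G : UFN V k) (u : V × Fin k) : Decidable (G.EmptyUpd u) :=
  inferInstanceAs (Decidable (outEdge (G.old u.2) u.1 = outEdge (G.new u.2) u.1))

/-- `R` updates every block in (at most) 3 consecutive rounds: first all internal
update-path vertices of the block, then the start vertex, then all old-path-only
vertices of the block. -/
def BlockPattern (G : UFN V k) (R : V × Fin k → ℕ) : Prop :=
  ∀ b : Blk V k, G.IsBlk b → ∃ r : ℕ,
    (∀ v ∈ G.blkNewSeg b, v ≠ b.2.1 → v ≠ b.2.2 → R (v, b.1) = r) ∧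
    R (b.2.1, b.1) = r + 1 ∧
    (∀ v ∈ G.blkOldSeg b, v ∉ G.new b.1 → R (v, b.1) = r + 2)

/-- The size of the network (total length of the flow paths). -/
def size (G : UFN V k) : ℕ := ∑ i : Fin k, ((G.old i).length + (G.new i).length)

end UFN

section Structural
set_option linter.unusedSectionVars false

variable {G : UFN V k} {i : Fin k}

theorem mem_commons_iff {v : V} : v ∈ G.commons i ↔ v ∈ G.old i ∧ v ∈ G.new i := by
  simp [UFN.commons, List.mem_filter]

theorem commons_sublist : List.Sublist (G.commons i) (G.old i) := List.filter_sublist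

theorem exists_ord (hWF : G.WellFormed) (i : Fin k) : ∃ ord : V → ℕ,
    (G.old i).Pairwise (fun u v => ord u < ord v) ∧
    (G.new i).Pairwise (fun u v => ord u < ord v) ∧
    (G.commons i).Pairwise (fun u v => ord u < ord v) := by
  obtain ⟨ord, hord⟩ := hWF.2.1 i
  haveI : IsTrans V (fun u v => ord u < ord v) := ⟨fun a b c h1 h2 => h1.trans h2⟩
  have hold : (G.old i).Pairwise (fun u v => ord u < ord v) := by
    rw [← List.isChain_iff_pairwise]; refine chain'_iff_edges.2 ?_
    exact fun e he => hord e (List.mem_append.2 (Or.inl he))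
  have hnew : (G.new i).Pairwise (fun u v => ord u < ord v) := by
    rw [← List.isChain_iff_pairwise]; refine chain'_iff_edges.2 ?_
    exact fun e he => hord e (List.mem_append.2 (Or.inr he))
  exact ⟨ord, hold, hnew, hold.sublist commons_sublist⟩

theorem old_nodup (hWF : G.WellFormed) : (G.old i).Nodup := by
  obtain ⟨ord, h1, h2, h3⟩ := exists_ord hWF i; exact pairwise_ne_of_lt h1

theorem new_nodup (hWF : G.WellFormed) : (G.new i).Nodup := by
  obtain ⟨ord, h1, h2, h3⟩ := exists_ord hWF i; exact pairwise_ne_of_lt h2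

theorem commons_nodup (hWF : G.WellFormed) : (G.commons i).Nodup :=
  (old_nodup hWF).sublist commons_sublist

theorem s_mem_old (hWF : G.WellFormed) : G.s ∈ G.old i :=
  List.mem_of_mem_head? (by simp [(hWF.1 i).1.1])

theorem s_mem_new (hWF : G.WellFormed) : G.s ∈ G.new i :=
  List.mem_of_mem_head? (by simp [(hWF.1 i).2.1])

theorem t_mem_old (hWF : G.WellFormed) : G.t ∈ G.old i :=
  List.mem_of_getLast? (hWF.1 i).1.2.1

theorem t_mem_new (hWF : G.WellFormed) : G.t ∈ G.new i :=
  List.mem_of_getLast? (hWF.1 i).2.2.1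

theorem commons_head (hWF : G.WellFormed) : (G.commons i).head? = some G.s := by
  have h1 := (hWF.1 i).1.1
  cases hol : G.old i with
  | nil => rw [hol] at h1; simp at h1
  | cons x l =>
    rw [hol] at h1; simp at h1
    subst h1
    unfold UFN.commons
    rw [hol, List.filter_cons_of_pos (by simp [s_mem_new hWF])]
    simp

theorem commons_last (hWF : G.WellFormed) : (G.commons i).getLast? = some G.t := by
  have h1 := (hWF.1 i).1.2.1
  obtain ⟨l', hl'⟩ : ∃ l', G.old i = l' ++ [G.t] := by
    cases hol : G.old i with
    | nil => rw [hol] at h1; simp at h1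
    | cons x l =>
      refine ⟨(x :: l).dropLast, ?_⟩
      have h2 : (x :: l).getLast (by simp) = G.t :=
        Option.some.inj ((List.getLast?_eq_getLast (l := x :: l) (by simp)).symm.trans (hol ▸ h1))
      conv_lhs => rw [← List.dropLast_append_getLast (l := x :: l) (by simp), h2]
  unfold UFN.commons
  rw [hl', List.filter_append, List.filter_cons_of_pos (by simp [t_mem_new hWF])]
  simp [List.getLast?_append]

/-- Facts about a block's old segment. -/
theorem block_old (hWF : G.WellFormed) {a z : V} (hb : (a, z) ∈ edgesOf (G.commons i)) :
    ∃ mid, segment (G.old i) a z = a :: mid ++ [z] ∧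
      (∀ e ∈ edgesOf (segment (G.old i) a z), e ∈ edgesOf (G.old i)) ∧
      (∀ v ∈ mid, v ∈ G.old i ∧ v ∉ G.new i) := by
  obtain ⟨ord, hold, hnew, hcom⟩ := exists_ord hWF i
  obtain ⟨m₁, m₂, hm⟩ := edgesOf_decomp hb
  have haz : ord a < ord z := by
    have := hcom; rw [hm, List.pairwise_append] at this
    exact (List.pairwise_cons.1 this.2.1).1 z (by simp)
  have ha : a ∈ G.old i := (mem_commons_iff.1 (by rw [hm]; simp)).1
  have hz : z ∈ G.old i := (mem_commons_iff.1 (by rw [hm]; simp)).1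
  obtain ⟨l₁, l₂, l₃, hdec⟩ := mem2 hold ha hz haz
  have hseg := segment_eq (pairwise_ne_of_lt hold) hdec
  refine ⟨l₂, hseg, ?_, ?_⟩
  · intro e he
    rw [hseg] at he
    rw [hdec, show l₁ ++ a :: l₂ ++ z :: l₃ = l₁ ++ (a :: l₂ ++ [z]) ++ l₃ by simp]
    exact edges_infix e he
  · intro v hv
    have hvold : v ∈ G.old i := by rw [hdec]; simp [hv]
    refine ⟨hvold, fun hvnew => ?_⟩
    have hvcom : v ∈ G.commons i := mem_commons_iff.2 ⟨hvold, hvnew⟩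
    have hp' : (a :: (l₂ ++ z :: l₃)).Pairwise (fun u v => ord u < ord v) := by
      have : List.Sublist (a :: (l₂ ++ z :: l₃)) (G.old i) := by
        rw [hdec, show l₁ ++ a :: l₂ ++ z :: l₃ = l₁ ++ (a :: (l₂ ++ z :: l₃)) by simp]
        exact List.sublist_append_right _ _
      exact hold.sublist this
    have hav : ord a < ord v := (List.pairwise_cons.1 hp').1 v (by simp [hv])
    have hvz : ord v < ord z := by
      have h2 := (List.pairwise_cons.1 hp').2
      rw [List.pairwise_append] at h2
      exact h2.2.2 v hv z (by simp)
    exact not_between hcom hm hvcom hav hvz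

/-- Facts about a block's new segment. -/
theorem block_new (hWF : G.WellFormed) {a z : V} (hb : (a, z) ∈ edgesOf (G.commons i)) :
    ∃ mid, segment (G.new i) a z = a :: mid ++ [z] ∧
      (∀ e ∈ edgesOf (segment (G.new i) a z), e ∈ edgesOf (G.new i)) ∧
      (∀ v ∈ mid, v ∈ G.new i ∧ v ∉ G.old i) := by
  obtain ⟨ord, hold, hnew, hcom⟩ := exists_ord hWF i
  obtain ⟨m₁, m₂, hm⟩ := edgesOf_decomp hb
  have haz : ord a < ord z := by
    have := hcom; rw [hm, List.pairwise_append] at this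
    exact (List.pairwise_cons.1 this.2.1).1 z (by simp)
  have ha : a ∈ G.new i := (mem_commons_iff.1 (by rw [hm]; simp)).2
  have hz : z ∈ G.new i := (mem_commons_iff.1 (by rw [hm]; simp)).2
  obtain ⟨l₁, l₂, l₃, hdec⟩ := mem2 hnew ha hz haz
  have hseg := segment_eq (pairwise_ne_of_lt hnew) hdec
  refine ⟨l₂, hseg, ?_, ?_⟩
  · intro e he
    rw [hseg] at he
    rw [hdec, show l₁ ++ a :: l₂ ++ z :: l₃ = l₁ ++ (a :: l₂ ++ [z]) ++ l₃ by simp]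
    exact edges_infix e he
  · intro v hv
    have hvnew : v ∈ G.new i := by rw [hdec]; simp [hv]
    refine ⟨hvnew, fun hvold => ?_⟩
    have hvcom : v ∈ G.commons i := mem_commons_iff.2 ⟨hvold, hvnew⟩
    have hp' : (a :: (l₂ ++ z :: l₃)).Pairwise (fun u v => ord u < ord v) := by
      have : List.Sublist (a :: (l₂ ++ z :: l₃)) (G.new i) := by
        rw [hdec, show l₁ ++ a :: l₂ ++ z :: l₃ = l₁ ++ (a :: (l₂ ++ z :: l₃)) by simp]
        exact List.sublist_append_right _ _
      exact hnew.sublist this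
    have hav : ord a < ord v := (List.pairwise_cons.1 hp').1 v (by simp [hv])
    have hvz : ord v < ord z := by
      have h2 := (List.pairwise_cons.1 hp').2
      rw [List.pairwise_append] at h2
      exact h2.2.2 v hv z (by simp)
    exact not_between hcom hm hvcom hav hvz

theorem block_start_ne_t (hWF : G.WellFormed) {a z : V} (hb : (a, z) ∈ edgesOf (G.commons i)) :
    a ≠ G.t := by
  obtain ⟨ord, hold, hnew, hcom⟩ := exists_ord hWF i
  obtain ⟨m₁, m₂, hm⟩ := edgesOf_decomp hb
  have haz : ord a < ord z := by
    have := hcom; rw [hm, List.pairwise_append] at this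
    exact (List.pairwise_cons.1 this.2.1).1 z (by simp)
  have hz : z ∈ G.old i := (mem_commons_iff.1 (by rw [hm]; simp)).1
  rintro rfl
  rcases mem_last_or_lt hold (hWF.1 i).1.2.1 hz with rfl | h
  · omega
  · omega

end Structural

section PathLemmas
set_option linter.unusedSectionVars false

theorem path_unique {E : V × V → Prop} (hfun : ∀ u w w', E (u, w) → E (u, w') → w = w') :
    ∀ (p : List V) {q : List V} {s t : V}, UFN.IsPathIn E s t p → UFN.IsPathIn E s t q → p = q := by
  intro p
  induction p with
  | nil => rintro q s t ⟨h, _⟩ _; simp at h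
  | cons x p ih =>
    rintro q s t ⟨hh, hl, hc, hnd⟩ ⟨hh', hl', hc', hnd'⟩
    replace hh : s = x := by simpa [eq_comm] using hh
    subst hh
    cases p with
    | nil =>
      simp at hl; subst hl
      cases q with
      | nil => simp at hh'
      | cons y q =>
        replace hh' : s = y := by simpa [eq_comm] using hh'
        subst hh'
        cases q with
        | nil => rfl
        | cons y' q' =>
          exfalso
          rw [List.getLast?_cons_cons] at hl'
          have : s ∈ y' :: q' := List.mem_of_getLast? hl'
          exact (List.nodup_cons.1 hnd').1 this
    | cons x' p' =>
      cases q with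
      | nil => simp at hh'
      | cons y q =>
        replace hh' : s = y := by simpa [eq_comm] using hh'
        subst hh'
        cases q with
        | nil =>
          exfalso
          simp at hl'; subst hl'
          rw [List.getLast?_cons_cons] at hl
          have : s ∈ x' :: p' := List.mem_of_getLast? hl
          exact (List.nodup_cons.1 hnd).1 this
        | cons y' q' =>
          have h1 : E (s, x') := (List.isChain_cons_cons.1 hc).1
          have h2 : E (s, y') := (List.isChain_cons_cons.1 hc').1
          have hxy : x' = y' := hfun s x' y' h1 h2
          subst hxy
          have heq : x' :: p' = x' :: q' := by
            refine ih (s := x') (t := t) ?_ ?_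
            · exact ⟨rfl, by rw [← List.getLast?_cons_cons (a := s)]; exact hl,
                (List.isChain_cons_cons.1 hc).2, (List.nodup_cons.1 hnd).2⟩
            · exact ⟨rfl, by rw [← List.getLast?_cons_cons (a := s)]; exact hl',
                (List.isChain_cons_cons.1 hc').2, (List.nodup_cons.1 hnd').2⟩
          simpa using heq

theorem chase {E : V × V → Prop} {T : List V} {t : V}
    (hch : List.Chain' (fun u v => E (u, v)) T) (hnd : T.Nodup) (hlast : T.getLast? = some t) :
    ∀ (q : List V), List.Chain' (fun u w => ∀ w', E (u, w') → w' = w) q →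
      (∀ u ∈ q.dropLast, u ≠ t) → ∀ c, q.head? = some c → c ∈ T →
      (∀ v ∈ q, v ∈ T) ∧ (∀ e ∈ edgesOf q, e ∈ edgesOf T) := by
  intro q
  induction q with
  | nil => intro _ _ c hc _; simp at hc
  | cons x q ih =>
    intro hq hnt c hc hcT
    replace hc : c = x := by simpa [eq_comm] using hc
    subst hc
    cases q with
    | nil =>
      refine ⟨?_, ?_⟩
      · intro v hv; simp at hv; subst hv; exact hcT
      · intro e he; simp [edgesOf_single] at he
    | cons w q' =>
      have hcnet : c ≠ t := hnt c (by simp)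
      obtain ⟨w₀, hw₀⟩ := exists_out hcT hlast hcnet
      have hEw₀ : E (c, w₀) := chain'_iff_edges.1 hch _ hw₀
      have hR : ∀ w', E (c, w') → w' = w := (List.isChain_cons_cons.1 hq).1
      have hww : w₀ = w := hR w₀ hEw₀
      subst hww
      have hwT : w₀ ∈ T := edge_snd_mem hw₀
      have hIH := ih (List.isChain_cons_cons.1 hq).2
        (fun u hu => hnt u (by simp at hu ⊢; tauto)) w₀ rfl hwT
      refine ⟨?_, ?_⟩
      · intro v hv
        rcases List.mem_cons.1 hv with rfl | hv
        · exact hcT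
        · exact hIH.1 v hv
      · intro e he
        rw [edgesOf_cons₂, List.mem_cons] at he
        rcases he with rfl | he
        · exact hw₀
        · exact hIH.2 e he

theorem fold_mem {T : List V} : ∀ (l : List V),
    (∀ a z, (a, z) ∈ edgesOf l → a ∈ T → z ∈ T) →
    ∀ c, l.head? = some c → c ∈ T → ∀ v ∈ l, v ∈ T := by
  intro l
  induction l with
  | nil => simp
  | cons x l ih =>
    intro hstep c hc hcT v hv
    replace hc : c = x := by simpa [eq_comm] using hc
    subst hc
    rcases List.mem_cons.1 hv with rfl | hv
    · exact hcT
    · cases l with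
      | nil => simp at hv
      | cons y l' =>
        have hyT : y ∈ T := hstep c y (by rw [edgesOf_cons₂]; simp) hcT
        exact ih (fun a z hz ha => hstep a z (by rw [edgesOf_cons₂]; simp [hz]) ha)
          y rfl hyT v hv

end PathLemmas

section ActiveLemmas
set_option linter.unusedSectionVars false

variable {G : UFN V k} {i : Fin k} {U : Set (V × Fin k)}

theorem act_functional (hWF : G.WellFormed) :
    ∀ u w w', G.active U i (u, w) → G.active U i (u, w') → w = w' := by
  intro u w w' h1 h2
  rcases h1 with ⟨h1, hu1⟩ | ⟨h1, hu1⟩ <;> rcases h2 with ⟨h2, hu2⟩ | ⟨h2, hu2⟩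
  · exact next_unique (old_nodup hWF) h1 h2
  · exact absurd hu2 hu1
  · exact absurd hu1 hu2
  · exact next_unique (new_nodup hWF) h1 h2

theorem block_step_new (hWF : G.WellFormed) {T : List V}
    (hT : UFN.IsPathIn (G.active U i) G.s G.t T) {a z : V}
    (hb : (a, z) ∈ edgesOf (G.commons i)) (haT : a ∈ T) (hU : (a, i) ∈ U) :
    z ∈ T ∧ ∀ e ∈ edgesOf (segment (G.new i) a z), e ∈ edgesOf T := by
  obtain ⟨hh, hl, hc, hnd⟩ := hT
  obtain ⟨mid, hseg, hsub, hmid⟩ := block_new hWF hb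
  have hq : List.Chain' (fun u w => ∀ w', G.active U i (u, w') → w' = w)
      (segment (G.new i) a z) := by
    rw [chain'_iff_edges]
    rintro ⟨u, w⟩ he
    have huw : (u, w) ∈ edgesOf (G.new i) := hsub _ he
    have hu : u ∈ a :: mid := by
      have := edge_fst_mem_dropLast he
      rwa [hseg, show a :: mid ++ [z] = (a :: mid) ++ [z] by simp,
        List.dropLast_concat] at this
    intro w' hact
    rcases hact with ⟨h1, hu1⟩ | ⟨h1, _⟩
    · exfalso
      rcases List.mem_cons.1 hu with rfl | hu
      · exact hu1 hU
      · exact (hmid u hu).2 (edge_fst_mem h1)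
    · exact next_unique (new_nodup hWF) h1 huw
  have hnt : ∀ u ∈ (segment (G.new i) a z).dropLast, u ≠ G.t := by
    intro u hu
    rw [hseg, show a :: mid ++ [z] = (a :: mid) ++ [z] by simp,
      List.dropLast_concat] at hu
    rcases List.mem_cons.1 hu with rfl | hu
    · exact block_start_ne_t hWF hb
    · rintro rfl; exact (hmid _ hu).2 (t_mem_old hWF)
  have hhead : (segment (G.new i) a z).head? = some a := by rw [hseg]; simp
  have := chase hc hnd hl _ hq hnt a hhead haT
  refine ⟨?_, this.2⟩
  exact this.1 z (by rw [hseg]; simp)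

theorem block_step_old (hWF : G.WellFormed) {T : List V}
    (hT : UFN.IsPathIn (G.active U i) G.s G.t T) {a z : V}
    (hb : (a, z) ∈ edgesOf (G.commons i)) (haT : a ∈ T) (hU : (a, i) ∉ U) :
    z ∈ T ∧ ∀ e ∈ edgesOf (segment (G.old i) a z), e ∈ edgesOf T := by
  obtain ⟨hh, hl, hc, hnd⟩ := hT
  obtain ⟨mid, hseg, hsub, hmid⟩ := block_old hWF hb
  have hq : List.Chain' (fun u w => ∀ w', G.active U i (u, w') → w' = w)
      (segment (G.old i) a z) := by
    rw [chain'_iff_edges]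
    rintro ⟨u, w⟩ he
    have huw : (u, w) ∈ edgesOf (G.old i) := hsub _ he
    have hu : u ∈ a :: mid := by
      have := edge_fst_mem_dropLast he
      rwa [hseg, show a :: mid ++ [z] = (a :: mid) ++ [z] by simp,
        List.dropLast_concat] at this
    intro w' hact
    rcases hact with ⟨h1, _⟩ | ⟨h1, hu1⟩
    · exact next_unique (old_nodup hWF) h1 huw
    · exfalso
      rcases List.mem_cons.1 hu with rfl | hu
      · exact hU hu1
      · exact (hmid u hu).2 (edge_fst_mem h1)
  have hnt : ∀ u ∈ (segment (G.old i) a z).dropLast, u ≠ G.t := by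
    intro u hu
    rw [hseg, show a :: mid ++ [z] = (a :: mid) ++ [z] by simp,
      List.dropLast_concat] at hu
    rcases List.mem_cons.1 hu with rfl | hu
    · exact block_start_ne_t hWF hb
    · rintro rfl; exact (hmid _ hu).2 (t_mem_new hWF)
  have hhead : (segment (G.old i) a z).head? = some a := by rw [hseg]; simp
  have := chase hc hnd hl _ hq hnt a hhead haT
  refine ⟨?_, this.2⟩
  exact this.1 z (by rw [hseg]; simp)

theorem commons_mem_path (hWF : G.WellFormed) {T : List V}
    (hT : UFN.IsPathIn (G.active U i) G.s G.t T) :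
    ∀ c ∈ G.commons i, c ∈ T := by
  classical
  have hsT : G.s ∈ T := List.mem_of_mem_head? (by simp [hT.1])
  refine fold_mem (G.commons i) ?_ G.s (commons_head hWF) hsT
  intro a z hb haT
  by_cases hU : (a, i) ∈ U
  · exact (block_step_new hWF hT hb haT hU).1
  · exact (block_step_old hWF hT hb haT hU).1

end ActiveLemmas

section Existence
set_option linter.unusedSectionVars false

variable {G : UFN V k} {i : Fin k} {U : Set (V × Fin k)}

/-- Origin property for edges of constructed transient paths. -/
def UFN.EdgeOrigin (G : UFN V k) (U : Set (V × Fin k)) (i : Fin k) (e : V × V) : Prop :=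
  ∃ a z, (a, z) ∈ edgesOf (G.commons i) ∧
    (((a, i) ∈ U ∧ e ∈ edgesOf (segment (G.new i) a z)) ∨
     ((a, i) ∉ U ∧ e ∈ edgesOf (segment (G.old i) a z)))

theorem exist_aux (hWF : G.WellFormed)
    (HC : ∀ a z, (a, z) ∈ edgesOf (G.commons i) →
      (((a, i) ∈ U → ∀ v ∈ segment (G.new i) a z, v ≠ a → v ≠ z → (v, i) ∈ U) ∧
       ((a, i) ∉ U → ∀ v ∈ segment (G.old i) a z, v ≠ a → v ≠ z → (v, i) ∉ U))) :
    ∀ (m m₀ : List V), G.commons i = m₀ ++ m → ∀ c, m.head? = some c →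
      ∃ q : List V, q.head? = some c ∧ q.getLast? = some G.t ∧
        List.Chain' (fun u v => G.active U i (u, v)) q ∧
        (∀ e ∈ edgesOf q, G.EdgeOrigin U i e) := by
  classical
  intro m
  induction m with
  | nil => intro _ _ c hc; simp at hc
  | cons c0 m ih =>
    intro m₀ hm c hc
    replace hc : c = c0 := by simpa [eq_comm] using hc
    subst hc
    cases m with
    | nil =>
      have hct : c = G.t := by
        have h1 := commons_last (G := G) (i := i) hWF
        rw [hm, List.getLast?_append] at h1
        simpa [Option.or] using h1
      subst hct
      exact ⟨[G.t], by simp, by simp, by simp [List.Chain'], by simp [edgesOf_single]⟩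
    | cons c' m' =>
      have hb : (c, c') ∈ edgesOf (G.commons i) := by
        rw [hm]; exact edge_mem_of_decomp _ _
      obtain ⟨q', hq'h, hq'l, hq'c, hq'o⟩ :=
        ih (m₀ ++ [c]) (by rw [hm]; simp) c' rfl
      obtain ⟨y, q'', rfl⟩ : ∃ y q'', q' = y :: q'' := by
        cases q' with
        | nil => simp at hq'h
        | cons y q'' => exact ⟨y, q'', rfl⟩
      replace hq'h : c' = y := by simpa [eq_comm] using hq'h
      subst hq'h
      by_cases hU : (c, i) ∈ U
      · obtain ⟨mid, hseg, hsub, hmid⟩ := block_new hWF hb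
        have hact : ∀ e ∈ edgesOf (segment (G.new i) c c'), G.active U i e := by
          rintro ⟨u, w⟩ he
          have huw : (u, w) ∈ edgesOf (G.new i) := hsub _ he
          have hu : u ∈ c :: mid := by
            have := edge_fst_mem_dropLast he
            rwa [hseg, show c :: mid ++ [c'] = (c :: mid) ++ [c'] by simp,
              List.dropLast_concat] at this
          refine Or.inr ⟨huw, ?_⟩
          rcases List.mem_cons.1 hu with rfl | hu2
          · exact hU
          · refine (HC c c' hb).1 hU u (by rw [hseg]; simp [hu2]) ?_ ?_
            · exact fun huc => (hmid u hu2).2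
                (by rw [huc]; exact (mem_commons_iff.1 (edge_fst_mem hb)).1)
            · exact fun huc => (hmid u hu2).2
                (by rw [huc]; exact (mem_commons_iff.1 (edge_snd_mem hb)).1)
        refine ⟨(c :: mid) ++ c' :: q'', by simp, ?_, ?_, ?_⟩
        · rw [List.getLast?_append]; simp [hq'l]
        · rw [chain'_iff_edges]
          intro e he
          rw [edges_append] at he
          rcases List.mem_append.1 he with he | he
          · exact hact e (by rw [hseg]; simpa using he)
          · exact chain'_iff_edges.1 hq'c e he
        · intro e he
          rw [edges_append] at he
          rcases List.mem_append.1 he with he | he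
          · exact ⟨c, c', hb, Or.inl ⟨hU, by rw [hseg]; simpa using he⟩⟩
          · exact hq'o e he
      · obtain ⟨mid, hseg, hsub, hmid⟩ := block_old hWF hb
        have hact : ∀ e ∈ edgesOf (segment (G.old i) c c'), G.active U i e := by
          rintro ⟨u, w⟩ he
          have huw : (u, w) ∈ edgesOf (G.old i) := hsub _ he
          have hu : u ∈ c :: mid := by
            have := edge_fst_mem_dropLast he
            rwa [hseg, show c :: mid ++ [c'] = (c :: mid) ++ [c'] by simp,
              List.dropLast_concat] at this
          refine Or.inl ⟨huw, ?_⟩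
          rcases List.mem_cons.1 hu with rfl | hu2
          · exact hU
          · refine (HC c c' hb).2 hU u (by rw [hseg]; simp [hu2]) ?_ ?_
            · exact fun huc => (hmid u hu2).2
                (by rw [huc]; exact (mem_commons_iff.1 (edge_fst_mem hb)).2)
            · exact fun huc => (hmid u hu2).2
                (by rw [huc]; exact (mem_commons_iff.1 (edge_snd_mem hb)).2)
        refine ⟨(c :: mid) ++ c' :: q'', by simp, ?_, ?_, ?_⟩
        · rw [List.getLast?_append]; simp [hq'l]
        · rw [chain'_iff_edges]
          intro e he
          rw [edges_append] at he
          rcases List.mem_append.1 he with he | he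
          · exact hact e (by rw [hseg]; simpa using he)
          · exact chain'_iff_edges.1 hq'c e he
        · intro e he
          rw [edges_append] at he
          rcases List.mem_append.1 he with he | he
          · exact ⟨c, c', hb, Or.inr ⟨hU, by rw [hseg]; simpa using he⟩⟩
          · exact hq'o e he

theorem active_nodup (hWF : G.WellFormed) {q : List V}
    (hq : List.Chain' (fun u v => G.active U i (u, v)) q) : q.Nodup := by
  obtain ⟨ord, hord⟩ := hWF.2.1 i
  haveI : IsTrans V (fun u v => ord u < ord v) := ⟨fun a b c h1 h2 => h1.trans h2⟩
  have : List.Chain' (fun u v => ord u < ord v) q := by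
    refine hq.imp ?_
    rintro u v (⟨h, _⟩ | ⟨h, _⟩)
    · exact hord (u, v) (List.mem_append.2 (Or.inl h))
    · exact hord (u, v) (List.mem_append.2 (Or.inr h))
  exact pairwise_ne_of_lt (List.isChain_iff_pairwise.1 this)

theorem transient_exists (hWF : G.WellFormed)
    (HC : ∀ a z, (a, z) ∈ edgesOf (G.commons i) →
      (((a, i) ∈ U → ∀ v ∈ segment (G.new i) a z, v ≠ a → v ≠ z → (v, i) ∈ U) ∧
       ((a, i) ∉ U → ∀ v ∈ segment (G.old i) a z, v ≠ a → v ≠ z → (v, i) ∉ U))) :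
    ∃ T : List V, UFN.IsPathIn (G.active U i) G.s G.t T ∧
      ∀ e ∈ edgesOf T, G.EdgeOrigin U i e := by
  obtain ⟨q, h1, h2, h3, h4⟩ :=
    exist_aux hWF HC (G.commons i) [] (by simp) G.s (commons_head hWF)
  exact ⟨q, ⟨h1, h2, h3, active_nodup hWF h3⟩, h4⟩

theorem cap_single_old (hWF : G.WellFormed) {e : V × V} (he : e ∈ edgesOf (G.old i)) :
    G.demand i ≤ G.cap e.1 e.2 := by
  have h := hWF.2.2.2.1 e.1 e.2
  calc G.demand i = if (e.1, e.2) ∈ edgesOf (G.old i) then G.demand i else 0 := by simp [he]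
    _ ≤ ∑ j : Fin k, if (e.1, e.2) ∈ edgesOf (G.old j) then G.demand j else 0 :=
        Finset.single_le_sum (f := fun j => if (e.1, e.2) ∈ edgesOf (G.old j) then G.demand j else 0)
          (fun _ _ => by positivity) (Finset.mem_univ i)
    _ ≤ G.cap e.1 e.2 := h

theorem cap_single_new (hWF : G.WellFormed) {e : V × V} (he : e ∈ edgesOf (G.new i)) :
    G.demand i ≤ G.cap e.1 e.2 := by
  have h := hWF.2.2.2.2 e.1 e.2
  calc G.demand i = if (e.1, e.2) ∈ edgesOf (G.new i) then G.demand i else 0 := by simp [he]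
    _ ≤ ∑ j : Fin k, if (e.1, e.2) ∈ edgesOf (G.new j) then G.demand j else 0 :=
        Finset.single_le_sum (f := fun j => if (e.1, e.2) ∈ edgesOf (G.new j) then G.demand j else 0)
          (fun _ _ => by positivity) (Finset.mem_univ i)
    _ ≤ G.cap e.1 e.2 := h

theorem valid_of_active (hWF : G.WellFormed) {T : List V}
    (hc : List.Chain' (fun u v => G.active U i (u, v)) T) : G.ValidPath i T := by
  intro e he
  rcases chain'_iff_edges.1 hc e he with ⟨h, _⟩ | ⟨h, _⟩
  · simpa using cap_single_old hWF (by simpa using h)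
  · simpa using cap_single_new hWF (by simpa using h)

theorem transient_pair_of (hWF : G.WellFormed)
    (HC : ∀ a z, (a, z) ∈ edgesOf (G.commons i) →
      (((a, i) ∈ U → ∀ v ∈ segment (G.new i) a z, v ≠ a → v ≠ z → (v, i) ∈ U) ∧
       ((a, i) ∉ U → ∀ v ∈ segment (G.old i) a z, v ≠ a → v ≠ z → (v, i) ∉ U))) :
    ∃ T : List V, G.TransientPair U i T ∧ ∀ e ∈ edgesOf T, G.EdgeOrigin U i e := by
  obtain ⟨T, hT, ho⟩ := transient_exists hWF HC
  refine ⟨T, ⟨hT, valid_of_active hWF hT.2.2.1, ?_⟩, ho⟩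
  intro p hp _
  exact path_unique (act_functional hWF) p hp hT

end Existence

section BlockUnique
set_option linter.unusedSectionVars false

variable {G : UFN V k} {i : Fin k}

theorem pairwise_total {ord : V → ℕ} {l : List V}
    (hp : l.Pairwise (fun u v => ord u < ord v)) {a a' : V}
    (ha : a ∈ l) (ha' : a' ∈ l) (hne : a ≠ a') : ord a < ord a' ∨ ord a' < ord a := by
  obtain ⟨p₁, p₂, rfl⟩ := List.append_of_mem ha
  rw [List.pairwise_append] at hp
  rcases List.mem_append.1 ha' with h | h
  · exact Or.inr (hp.2.2 a' h a (by simp))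
  · rcases List.mem_cons.1 h with rfl | h
    · exact absurd rfl hne
    · exact Or.inl ((List.pairwise_cons.1 hp.2.1).1 a' h)

theorem mem_seg_cases {a z v : V} {mid : List V} (hv : v ∈ a :: mid ++ [z])
    (h1 : v ≠ a) (h2 : v ≠ z) : v ∈ mid := by
  rcases List.mem_cons.1 hv with rfl | hv
  · exact absurd rfl h1
  · rcases List.mem_append.1 hv with hv | hv
    · exact hv
    · simp at hv; exact absurd hv h2

theorem internal_new_mem (hWF : G.WellFormed) {a z v : V}
    (hb : (a, z) ∈ edgesOf (G.commons i)) (hv : v ∈ segment (G.new i) a z)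
    (h1 : v ≠ a) (h2 : v ≠ z) : v ∈ G.new i ∧ v ∉ G.old i := by
  obtain ⟨mid, hseg, _, hmid⟩ := block_new hWF hb
  rw [hseg] at hv
  exact hmid v (mem_seg_cases hv h1 h2)

theorem internal_old_mem (hWF : G.WellFormed) {a z v : V}
    (hb : (a, z) ∈ edgesOf (G.commons i)) (hv : v ∈ segment (G.old i) a z)
    (h1 : v ≠ a) (h2 : v ≠ z) : v ∈ G.old i ∧ v ∉ G.new i := by
  obtain ⟨mid, hseg, _, hmid⟩ := block_old hWF hb
  rw [hseg] at hv
  exact hmid v (mem_seg_cases hv h1 h2)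

theorem ord_bounds_aux {ord : V → ℕ} {p : List V}
    (hp : p.Pairwise (fun u v => ord u < ord v)) {a z v : V} {l₁ l₂ l₃ : List V}
    (hdec : p = l₁ ++ a :: l₂ ++ z :: l₃) (hv : v ∈ l₂) :
    ord a < ord v ∧ ord v < ord z := by
  have hp' : (a :: (l₂ ++ z :: l₃)).Pairwise (fun u v => ord u < ord v) := by
    have hs : List.Sublist (a :: (l₂ ++ z :: l₃)) p := by
      rw [hdec, show l₁ ++ a :: l₂ ++ z :: l₃ = l₁ ++ (a :: (l₂ ++ z :: l₃)) by simp]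
      exact List.sublist_append_right _ _
    exact hp.sublist hs
  constructor
  · exact (List.pairwise_cons.1 hp').1 v (by simp [hv])
  · have h2 := (List.pairwise_cons.1 hp').2
    rw [List.pairwise_append] at h2
    exact h2.2.2 v hv z (by simp)

theorem commons_adj_lt {ord : V → ℕ}
    (hcom : (G.commons i).Pairwise (fun u v => ord u < ord v)) {a z : V}
    (hb : (a, z) ∈ edgesOf (G.commons i)) : ord a < ord z := by
  obtain ⟨m₁, m₂, hm⟩ := edgesOf_decomp hb
  rw [hm, List.pairwise_append] at hcom
  exact (List.pairwise_cons.1 hcom.2.1).1 z (by simp)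

theorem internal_new_unique (hWF : G.WellFormed) {a z a' z' v : V}
    (hb : (a, z) ∈ edgesOf (G.commons i)) (hb' : (a', z') ∈ edgesOf (G.commons i))
    (hv : v ∈ segment (G.new i) a z) (h1 : v ≠ a) (h2 : v ≠ z)
    (hv' : v ∈ segment (G.new i) a' z') (h1' : v ≠ a') (h2' : v ≠ z') :
    a = a' ∧ z = z' := by
  obtain ⟨ord, hold, hnew, hcom⟩ := exists_ord hWF i
  have key : ∀ {b y : V}, (b, y) ∈ edgesOf (G.commons i) → v ∈ segment (G.new i) b y →
      v ≠ b → v ≠ y → ord b < ord v ∧ ord v < ord y := by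
    intro b y hby hvm hvb hvy
    have hbmem := mem_commons_iff.1 (edge_fst_mem hby)
    have hymem := mem_commons_iff.1 (edge_snd_mem hby)
    obtain ⟨l₁, l₂, l₃, hdec⟩ := mem2 hnew hbmem.2 hymem.2 (commons_adj_lt hcom hby)
    have hseg := segment_eq (pairwise_ne_of_lt hnew) hdec
    rw [hseg] at hvm
    exact ord_bounds_aux hnew hdec (mem_seg_cases hvm hvb hvy)
  obtain ⟨ha1, ha2⟩ := key hb hv h1 h2
  obtain ⟨hb1, hb2⟩ := key hb' hv' h1' h2'
  have haa : a = a' := by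
    by_contra hne
    obtain ⟨m₁, m₂, hm0⟩ := edgesOf_decomp hb
    obtain ⟨m₁', m₂', hm0'⟩ := edgesOf_decomp hb'
    have hm : G.commons i = m₁ ++ a :: z :: m₂ := hm0
    have hm' : G.commons i = m₁' ++ a' :: z' :: m₂' := hm0'
    have hac : a ∈ G.commons i := edge_fst_mem hb
    have ha'c : a' ∈ G.commons i := edge_fst_mem hb'
    rcases pairwise_total hcom hac ha'c hne with h | h
    · exact not_between hcom hm ha'c h (by omega)
    · exact not_between hcom hm' hac h (by omega)
  subst haa
  exact ⟨rfl, next_unique (commons_nodup hWF) hb hb'⟩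

theorem internal_old_unique (hWF : G.WellFormed) {a z a' z' v : V}
    (hb : (a, z) ∈ edgesOf (G.commons i)) (hb' : (a', z') ∈ edgesOf (G.commons i))
    (hv : v ∈ segment (G.old i) a z) (h1 : v ≠ a) (h2 : v ≠ z)
    (hv' : v ∈ segment (G.old i) a' z') (h1' : v ≠ a') (h2' : v ≠ z') :
    a = a' ∧ z = z' := by
  obtain ⟨ord, hold, hnew, hcom⟩ := exists_ord hWF i
  have key : ∀ {b y : V}, (b, y) ∈ edgesOf (G.commons i) → v ∈ segment (G.old i) b y →
      v ≠ b → v ≠ y → ord b < ord v ∧ ord v < ord y := by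
    intro b y hby hvm hvb hvy
    have hbmem := mem_commons_iff.1 (edge_fst_mem hby)
    have hymem := mem_commons_iff.1 (edge_snd_mem hby)
    obtain ⟨l₁, l₂, l₃, hdec⟩ := mem2 hold hbmem.1 hymem.1 (commons_adj_lt hcom hby)
    have hseg := segment_eq (pairwise_ne_of_lt hold) hdec
    rw [hseg] at hvm
    exact ord_bounds_aux hold hdec (mem_seg_cases hvm hvb hvy)
  obtain ⟨ha1, ha2⟩ := key hb hv h1 h2
  obtain ⟨hb1, hb2⟩ := key hb' hv' h1' h2'
  have haa : a = a' := by
    by_contra hne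
    obtain ⟨m₁, m₂, hm0⟩ := edgesOf_decomp hb
    obtain ⟨m₁', m₂', hm0'⟩ := edgesOf_decomp hb'
    have hm : G.commons i = m₁ ++ a :: z :: m₂ := hm0
    have hm' : G.commons i = m₁' ++ a' :: z' :: m₂' := hm0'
    have hac : a ∈ G.commons i := edge_fst_mem hb
    have ha'c : a' ∈ G.commons i := edge_fst_mem hb'
    rcases pairwise_total hcom hac ha'c hne with h | h
    · exact not_between hcom hm ha'c h (by omega)
    · exact not_between hcom hm' hac h (by omega)
  subst haa
  exact ⟨rfl, next_unique (commons_nodup hWF) hb hb'⟩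

end BlockUnique

section Main2
set_option linter.unusedSectionVars false

theorem feasible_no_cycle {G : UFN V 2} (hWF : G.WellFormed) {R : V × Fin 2 → ℕ}
    (hF : G.Feasible R) : ¬ G.HasDepCycle := by
  rintro ⟨b, hcyc⟩
  have hdep : ∀ b1 b2 : UFN.Blk V 2, G.Dep b1 b2 → R (b2.2.1, b2.1) < R (b1.2.1, b1.1) := by
    rintro ⟨i, a1, z1⟩ ⟨j, a2, z2⟩ ⟨hB1, hB2, hij, ⟨eu, ev⟩, he1, he2, hcap⟩
    have hb1 : (a1, z1) ∈ edgesOf (G.commons i) := hB1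
    have hb2 : (a2, z2) ∈ edgesOf (G.commons j) := hB2
    have he1' : (eu, ev) ∈ edgesOf (segment (G.new i) a1 z1) := he1
    have he2' : (eu, ev) ∈ edgesOf (segment (G.old j) a2 z2) := he2
    have hij' : i ≠ j := hij
    have hcap' : G.cap eu ev < G.demand i + G.demand j := hcap
    simp only
    set r := R (a1, i) with hr
    obtain ⟨T, hT, hcapT⟩ := hF r {(a1, i)}
      (by rintro u hu; simp at hu; subst hu; rfl)
    set U : Set (V × Fin 2) := {u | R u < r} ∪ {(a1, i)} with hUdef
    have hU1 : (a1, i) ∈ U := Or.inr rfl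
    have ha1T : a1 ∈ T i := commons_mem_path hWF (hT i).1 a1 (edge_fst_mem hb1)
    have he1T : (eu, ev) ∈ edgesOf (T i) :=
      (block_step_new hWF (hT i).1 hb1 ha1T hU1).2 _ he1'
    have hU2 : (a2, j) ∈ U := by
      by_contra hU2
      have ha2T : a2 ∈ T j := commons_mem_path hWF (hT j).1 a2 (edge_fst_mem hb2)
      have he2T : (eu, ev) ∈ edgesOf (T j) :=
        (block_step_old hWF (hT j).1 hb2 ha2T hU2).2 _ he2'
      have h2 : ∑ x ∈ ({i, j} : Finset (Fin 2)),
          (if (eu, ev) ∈ edgesOf (T x) then G.demand x else 0) ≤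
          ∑ x : Fin 2, (if (eu, ev) ∈ edgesOf (T x) then G.demand x else 0) :=
        Finset.sum_le_sum_of_subset_of_nonneg (Finset.subset_univ _)
          (fun _ _ _ => Nat.zero_le _)
      rw [Finset.sum_pair hij', if_pos he1T, if_pos he2T] at h2
      have h3 := le_trans h2 (hcapT eu ev)
      omega
    rcases hU2 with h | h
    · exact h
    · exfalso
      have : j = i := congrArg Prod.snd h
      exact hij' this.symm
  have htrans : Transitive (fun b1 b2 : UFN.Blk V 2 => R (b2.2.1, b2.1) < R (b1.2.1, b1.1)) :=
    fun x y z h1 h2 => lt_trans h2 h1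
  have := Relation.TransGen.mono (r := G.Dep)
    (p := fun b1 b2 : UFN.Blk V 2 => R (b2.2.1, b2.1) < R (b1.2.1, b1.1)) hdep b b hcyc
  haveI hIT : IsTrans _ (fun b1 b2 : UFN.Blk V 2 => R (b2.2.1, b2.1) < R (b1.2.1, b1.1)) := ⟨htrans⟩
  rw [Relation.transGen_eq_self] at this
  exact lt_irrefl _ this

theorem no_cycle_feasible {G : UFN V 2} (hWF : G.WellFormed) (hA : ¬ G.HasDepCycle) :
    ∃ R : V × Fin 2 → ℕ, G.Feasible R := by
  classical
  have hfin : {b : UFN.Blk V 2 | G.IsBlk b}.Finite := by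
    refine Set.Finite.subset (Set.finite_iUnion
      (fun i : Fin 2 => ((edgesOf (G.commons i)).finite_toSet.image (fun e => (i, e))))) ?_
    rintro ⟨i, e⟩ h
    exact Set.mem_iUnion.2 ⟨i, ⟨e, h, rfl⟩⟩
  have hblk_of : ∀ {b b' : UFN.Blk V 2}, Relation.TransGen G.Dep b b' → G.IsBlk b' := by
    intro b b' h
    induction h with
    | single h => exact h.2.1
    | tail _ h _ => exact h.2.1
  have hreach_fin : ∀ b : UFN.Blk V 2, {b' | Relation.TransGen G.Dep b b'}.Finite :=
    fun b => hfin.subset (fun b' hb' => hblk_of hb')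
  set ρ : UFN.Blk V 2 → ℕ := fun b => {b' | Relation.TransGen G.Dep b b'}.ncard with hρdef
  have hρ : ∀ b1 b2 : UFN.Blk V 2, G.Dep b1 b2 → ρ b2 < ρ b1 := by
    intro b1 b2 hd
    refine Set.ncard_lt_ncard ?_ (hreach_fin b1)
    rw [Set.ssubset_def]
    constructor
    · intro x hx; exact Relation.TransGen.head hd hx
    · intro hsub
      exact hA ⟨b2, hsub (Relation.TransGen.single hd)⟩
  set R : V × Fin 2 → ℕ := fun u =>
    if h1 : ∃ z, (u.1, z) ∈ edgesOf (G.commons u.2) then 3 * ρ (u.2, u.1, h1.choose) + 1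
    else if h2 : ∃ p : V × V, (p.1, p.2) ∈ edgesOf (G.commons u.2) ∧
        u.1 ∈ segment (G.new u.2) p.1 p.2 ∧ u.1 ≠ p.1 ∧ u.1 ≠ p.2 then
      3 * ρ (u.2, h2.choose.1, h2.choose.2)
    else if h3 : ∃ p : V × V, (p.1, p.2) ∈ edgesOf (G.commons u.2) ∧
        u.1 ∈ segment (G.old u.2) p.1 p.2 ∧ u.1 ≠ p.1 ∧ u.1 ≠ p.2 then
      3 * ρ (u.2, h3.choose.1, h3.choose.2) + 2
    else 0 with hRdef
  have hRstart : ∀ (i : Fin 2) (a z : V), (a, z) ∈ edgesOf (G.commons i) →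
      R (a, i) = 3 * ρ (i, a, z) + 1 := by
    intro i a z hb
    have h1 : ∃ z', ((a, i).1, z') ∈ edgesOf (G.commons (a, i).2) := ⟨z, hb⟩
    rw [hRdef]
    simp only [dif_pos h1]
    have hzz : h1.choose = z := next_unique (commons_nodup hWF) h1.choose_spec hb
    rw [hzz]
  have hRnew : ∀ (i : Fin 2) (a z v : V), (a, z) ∈ edgesOf (G.commons i) →
      v ∈ segment (G.new i) a z → v ≠ a → v ≠ z → R (v, i) = 3 * ρ (i, a, z) := by
    intro i a z v hb hv h1 h2
    have hno1 : ¬ ∃ z', ((v, i).1, z') ∈ edgesOf (G.commons (v, i).2) := by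
      rintro ⟨z', hz'⟩
      exact (internal_new_mem hWF hb hv h1 h2).2 (mem_commons_iff.1 (edge_fst_mem hz')).1
    have hyes : ∃ p : V × V, (p.1, p.2) ∈ edgesOf (G.commons (v, i).2) ∧
        (v, i).1 ∈ segment (G.new (v, i).2) p.1 p.2 ∧ (v, i).1 ≠ p.1 ∧ (v, i).1 ≠ p.2 :=
      ⟨(a, z), hb, hv, h1, h2⟩
    rw [hRdef]
    simp only [dif_neg hno1, dif_pos hyes]
    obtain ⟨hc1, hc2, hc3, hc4⟩ := hyes.choose_spec
    obtain ⟨e1, e2⟩ := internal_new_unique hWF hb hc1 hv h1 h2 hc2 hc3 hc4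
    rw [← e1, ← e2]
  have hRold : ∀ (i : Fin 2) (a z v : V), (a, z) ∈ edgesOf (G.commons i) →
      v ∈ segment (G.old i) a z → v ≠ a → v ≠ z → R (v, i) = 3 * ρ (i, a, z) + 2 := by
    intro i a z v hb hv h1 h2
    have hvm := internal_old_mem hWF hb hv h1 h2
    have hno1 : ¬ ∃ z', ((v, i).1, z') ∈ edgesOf (G.commons (v, i).2) := by
      rintro ⟨z', hz'⟩
      exact hvm.2 (mem_commons_iff.1 (edge_fst_mem hz')).2
    have hno2 : ¬ ∃ p : V × V, (p.1, p.2) ∈ edgesOf (G.commons (v, i).2) ∧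
        (v, i).1 ∈ segment (G.new (v, i).2) p.1 p.2 ∧ (v, i).1 ≠ p.1 ∧ (v, i).1 ≠ p.2 := by
      rintro ⟨p, hp1, hp2, hp3, hp4⟩
      exact (internal_new_mem hWF hp1 hp2 hp3 hp4).2 hvm.1
    have hyes : ∃ p : V × V, (p.1, p.2) ∈ edgesOf (G.commons (v, i).2) ∧
        (v, i).1 ∈ segment (G.old (v, i).2) p.1 p.2 ∧ (v, i).1 ≠ p.1 ∧ (v, i).1 ≠ p.2 :=
      ⟨(a, z), hb, hv, h1, h2⟩
    rw [hRdef]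
    simp only [dif_neg hno1, dif_neg hno2, dif_pos hyes]
    obtain ⟨hc1, hc2, hc3, hc4⟩ := hyes.choose_spec
    obtain ⟨e1, e2⟩ := internal_old_unique hWF hb hc1 hv h1 h2 hc2 hc3 hc4
    rw [← e1, ← e2]
  refine ⟨R, ?_⟩
  intro r S hS
  set U : Set (V × Fin 2) := {u | R u < r} ∪ S with hUdef
  have hUle : ∀ w : V × Fin 2, w ∈ U → R w ≤ r := by
    rintro w (hw | hw)
    · exact le_of_lt hw
    · exact le_of_eq (hS w hw)
  have hUnotin : ∀ w : V × Fin 2, R w > r → w ∉ U := by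
    rintro w hw hmem
    rcases hmem with h | h
    · exact absurd (show R w < r from h) (by omega)
    · have := hS w h; omega
  have HC : ∀ i : Fin 2, ∀ a z : V, (a, z) ∈ edgesOf (G.commons i) →
      (((a, i) ∈ U → ∀ v ∈ segment (G.new i) a z, v ≠ a → v ≠ z → (v, i) ∈ U) ∧
       ((a, i) ∉ U → ∀ v ∈ segment (G.old i) a z, v ≠ a → v ≠ z → (v, i) ∉ U)) := by
    intro i a z hb
    constructor
    · intro haU v hv h1 h2
      have h3 := hUle _ haU
      rw [hRstart i a z hb] at h3
      left
      show R (v, i) < r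
      rw [hRnew i a z v hb hv h1 h2]
      omega
    · intro haU v hv h1 h2
      have h3 : ¬ R (a, i) < r := fun h => haU (Or.inl h)
      rw [hRstart i a z hb] at h3
      refine hUnotin _ ?_
      rw [hRold i a z v hb hv h1 h2]
      omega
  have hTP := fun i : Fin 2 => transient_pair_of (U := U) hWF (HC i)
  choose T hT1 hT2 using hTP
  refine ⟨T, hT1, ?_⟩
  intro u v
  rw [Fin.sum_univ_two]
  -- helper to analyze origins
  have horig : ∀ i : Fin 2, (u, v) ∈ edgesOf (T i) →
      ((u, v) ∈ edgesOf (G.old i) ∨ (u, v) ∈ edgesOf (G.new i)) := by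
    intro i hm
    obtain ⟨a, z, hb, hcase⟩ := hT2 i (u, v) hm
    rcases hcase with ⟨_, hseg⟩ | ⟨_, hseg⟩
    · obtain ⟨mid, _, hsub, _⟩ := block_new hWF hb
      exact Or.inr (hsub _ hseg)
    · obtain ⟨mid, _, hsub, _⟩ := block_old hWF hb
      exact Or.inl (hsub _ hseg)
  by_cases m0 : (u, v) ∈ edgesOf (T 0) <;> by_cases m1 : (u, v) ∈ edgesOf (T 1)
  · -- both used
    simp only [m0, m1, if_pos]
    obtain ⟨a0, z0, hb0, hcase0⟩ := hT2 0 (u, v) m0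
    obtain ⟨a1, z1, hb1, hcase1⟩ := hT2 1 (u, v) m1
    rcases hcase0 with ⟨hU0, hseg0⟩ | ⟨hU0, hseg0⟩ <;>
      rcases hcase1 with ⟨hU1, hseg1⟩ | ⟨hU1, hseg1⟩
    · -- both new
      obtain ⟨_, _, hsub0, _⟩ := block_new hWF hb0
      obtain ⟨_, _, hsub1, _⟩ := block_new hWF hb1
      have h := hWF.2.2.2.2 u v
      rw [Fin.sum_univ_two] at h
      simp only [hsub0 _ hseg0, hsub1 _ hseg1, if_pos] at h
      exact h
    · -- 0 new, 1 old : potential dependency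
      by_contra hcon
      push_neg at hcon
      have hcap : G.cap u v < G.demand 0 + G.demand 1 := hcon
      have hdep : G.Dep (0, a0, z0) (1, a1, z1) := by
        refine ⟨hb0, hb1, show (0 : Fin 2) ≠ 1 by decide, (u, v), hseg0, hseg1, ?_⟩
        simpa using hcap
      have hlt := hρ _ _ hdep
      have h3 := hUle _ hU0
      rw [hRstart 0 a0 z0 hb0] at h3
      refine hU1 (Or.inl ?_)
      show R (a1, 1) < r
      rw [hRstart 1 a1 z1 hb1]
      omega
    · -- 0 old, 1 new
      by_contra hcon
      push_neg at hcon
      have hcap : G.cap u v < G.demand 0 + G.demand 1 := hcon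
      have hdep : G.Dep (1, a1, z1) (0, a0, z0) := by
        refine ⟨hb1, hb0, show (1 : Fin 2) ≠ 0 by decide, (u, v), hseg1, hseg0, ?_⟩
        simpa [Nat.add_comm] using hcap
      have hlt := hρ _ _ hdep
      have h3 := hUle _ hU1
      rw [hRstart 1 a1 z1 hb1] at h3
      refine hU0 (Or.inl ?_)
      show R (a0, 0) < r
      rw [hRstart 0 a0 z0 hb0]
      omega
    · -- both old
      obtain ⟨_, _, hsub0, _⟩ := block_old hWF hb0
      obtain ⟨_, _, hsub1, _⟩ := block_old hWF hb1
      have h := hWF.2.2.2.1 u v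
      rw [Fin.sum_univ_two] at h
      simp only [hsub0 _ hseg0, hsub1 _ hseg1, if_pos] at h
      exact h
  · simp only [m0, m1, if_pos, if_neg, not_false_iff, add_zero]
    rcases horig 0 m0 with h | h
    · simpa using cap_single_old hWF h
    · simpa using cap_single_new hWF h
  · simp only [m0, m1, if_pos, if_neg, not_false_iff, zero_add]
    rcases horig 1 m1 with h | h
    · simpa using cap_single_old hWF h
    · simpa using cap_single_new hWF h
  · simp [m0, m1]

end Main2

end FlowUpdate

open FlowUpdate in
/-- For an update flow network with exactly two update flow pairs,
each forming a DAG, a feasible update sequence exists if and only if the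
dependency graph of its blocks is acyclic. -/
theorem stmt8 {V : Type} [DecidableEq V] (G : UFN V 2) (hWF : G.WellFormed) :
    (∃ R : V × Fin 2 → ℕ, G.Feasible R) ↔ ¬ G.HasDepCycle := by
  constructor
  · rintro ⟨R, hF⟩
    exact feasible_no_cycle hWF hF
  · intro hA
    exact no_cycle_feasible hWF hA
end

section
/- Let P = (F^o, F^u) be an update flow pair whose union F^o ∪ F^u is a DAG, and let z_1 ≺ z_2 ≺ … ≺ z_k be the common vertices of F^o and F^u in topological order (z_1 = s, z_k = t). Then the edge sets of the blocks b_1, …, b_{k−1}, where b_j is induced by the vertices v with z_j ⪯ v ⪯ z_{j+1}, partition the symmetric difference of the edge sets of F^o and F^u, and within each block F^o and F^u are internally vertex-disjoint paths from z_j to z_{j+1}. -/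
namespace FlowUpdate.Aux
open FlowUpdate
set_option linter.unusedSectionVars false

variable {V : Type} [DecidableEq V] {ord : V → ℕ}

theorem edgesOf_cons (a b : V) (l : List V) :
    edgesOf (a :: b :: l) = (a, b) :: edgesOf (b :: l) := rfl

theorem mem_edgesOf {u v : V} {p : List V} :
    (u, v) ∈ edgesOf p ↔ ∃ x y, p = x ++ u :: v :: y := by
  induction p with
  | nil =>
    simp only [edgesOf, List.zip_nil_left, List.not_mem_nil, false_iff]
    rintro ⟨x, y, hx⟩
    exact absurd (congrArg List.length hx) (by simp)
  | cons a l ih =>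
    cases l with
    | nil =>
      simp only [edgesOf, List.tail_cons, List.zip_nil_right, List.not_mem_nil, false_iff]
      rintro ⟨x, y, hx⟩
      apply_fun List.length at hx
      simp at hx; omega
    | cons b l =>
      rw [edgesOf_cons, List.mem_cons, ih]
      constructor
      · rintro (h | ⟨x, y, hx⟩)
        · obtain ⟨rfl, rfl⟩ := Prod.mk.injEq .. ▸ h
          exact ⟨[], l, rfl⟩
        · exact ⟨a :: x, y, by simp [hx]⟩
      · rintro ⟨x, y, hx⟩
        cases x with
        | nil =>
          simp only [List.nil_append, List.cons.injEq] at hx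
          exact Or.inl (by simp [hx.1, hx.2.1])
        | cons w x =>
          simp only [List.cons_append, List.cons.injEq] at hx
          exact Or.inr ⟨x, y, hx.2⟩

theorem fst_mem_of_edge {u v : V} {p : List V} (h : (u, v) ∈ edgesOf p) : u ∈ p := by
  obtain ⟨x, y, rfl⟩ := mem_edgesOf.mp h; simp

theorem snd_mem_of_edge {u v : V} {p : List V} (h : (u, v) ∈ edgesOf p) : v ∈ p := by
  obtain ⟨x, y, rfl⟩ := mem_edgesOf.mp h; simp

theorem pairwise_of_edge {R : V → V → Prop} {p : List V} (hp : p.Pairwise R)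
    {u v : V} (h : (u, v) ∈ edgesOf p) : R u v := by
  obtain ⟨x, y, rfl⟩ := mem_edgesOf.mp h
  have := (List.pairwise_append.mp hp).2.1
  exact (List.pairwise_cons.mp this).1 v (by simp)

theorem succ_unique {p : List V} (hp : p.Nodup) {u v w : V}
    (h1 : (u, v) ∈ edgesOf p) (h2 : (u, w) ∈ edgesOf p) : v = w := by
  induction p with
  | nil => cases h1
  | cons a l ih =>
    cases l with
    | nil => cases h1
    | cons b l =>
      rw [edgesOf_cons, List.mem_cons] at h1 h2
      rcases h1 with h1 | h1 <;> rcases h2 with h2 | h2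
      · rw [Prod.ext_iff] at h1 h2; simp at h1 h2; rw [h1.2, h2.2]
      · exfalso
        have : u = a := (Prod.ext_iff.mp h1).1
        exact (List.nodup_cons.mp hp).1 (this ▸ fst_mem_of_edge h2)
      · exfalso
        have : u = a := (Prod.ext_iff.mp h2).1
        exact (List.nodup_cons.mp hp).1 (this ▸ fst_mem_of_edge h1)
      · exact ih (List.nodup_cons.mp hp).2 h1 h2

theorem edgesOf_infix {S p x y : List V} (h : p = x ++ S ++ y)
    {e : V × V} (he : e ∈ edgesOf S) : e ∈ edgesOf p := by
  obtain ⟨u, v⟩ := e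
  obtain ⟨x', y', rfl⟩ := mem_edgesOf.mp he
  exact mem_edgesOf.mpr ⟨x ++ x', y' ++ y, by simp [h]⟩

theorem dropWhile_eq {f : V → Bool} {l₁ l₂ : List V} {a : V}
    (h : ∀ x ∈ l₁, f x = true) (ha : f a = false) :
    (l₁ ++ a :: l₂).dropWhile f = a :: l₂ := by
  induction l₁ with
  | nil => simp [List.dropWhile_cons, ha]
  | cons x l ih =>
    rw [List.cons_append, List.dropWhile_cons, if_pos (h x (by simp))]
    exact ih fun y hy => h y (by simp [hy])

theorem takeWhile_eq {f : V → Bool} {l₁ l₂ : List V} {z : V}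
    (h : ∀ x ∈ l₁, f x = true) (hz : f z = false) :
    (l₁ ++ z :: l₂).takeWhile f = l₁ := by
  induction l₁ with
  | nil => simp [List.takeWhile_cons, hz]
  | cons x l ih =>
    rw [List.cons_append, List.takeWhile_cons, if_pos (h x (by simp))]
    rw [ih fun y hy => h y (by simp [hy])]

theorem segment_eq {p l₁ l₂ l₃ : List V} {a z : V}
    (hp : p = l₁ ++ a :: (l₂ ++ z :: l₃))
    (ha1 : a ∉ l₁) (haz : a ≠ z) (hz2 : z ∉ l₂) :
    segment p a z = a :: (l₂ ++ [z]) := by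
  subst hp
  unfold segment
  rw [dropWhile_eq (fun x hx => by simp; exact fun h => ha1 (h ▸ hx))
      (by simp)]
  have : a :: (l₂ ++ z :: l₃) = (a :: l₂) ++ z :: l₃ := by simp
  rw [this, takeWhile_eq (fun x hx => by
        simp at hx ⊢
        rcases hx with rfl | hx
        · exact haz
        · exact fun h => hz2 (h ▸ hx))
      (by simp)]
  simp

theorem split2 {p : List V} (hp : p.Pairwise (fun u v => ord u < ord v))
    {a z : V} (ha : a ∈ p) (hz : z ∈ p) (haz : ord a < ord z) :
    ∃ l₁ l₂ l₃, p = l₁ ++ a :: (l₂ ++ z :: l₃) := by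
  obtain ⟨l₁, r, rfl⟩ := List.append_of_mem ha
  have hzr : z ∈ r := by
    rcases List.mem_append.mp hz with h | h
    · exact absurd ((List.pairwise_append.mp hp).2.2 z h a (by simp)) (by omega)
    · rcases List.mem_cons.mp h with rfl | h
      · omega
      · exact h
  obtain ⟨l₂, l₃, rfl⟩ := List.append_of_mem hzr
  exact ⟨l₁, l₂, l₃, rfl⟩

/-- The main structural facts about a segment between `a` and `z` on a
topologically sorted path `p`. -/
theorem segment_spec {p : List V} (hp : p.Pairwise (fun u v => ord u < ord v))
    {a z : V} (ha : a ∈ p) (hz : z ∈ p) (haz : ord a < ord z) :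
    (segment p a z).head? = some a ∧
    (segment p a z).getLast? = some z ∧
    (∀ w, w ∈ segment p a z ↔ w ∈ p ∧ ord a ≤ ord w ∧ ord w ≤ ord z) ∧
    (∀ u v : V, ((u, v) ∈ edgesOf (segment p a z) ↔
      (u, v) ∈ edgesOf p ∧ ord a ≤ ord u ∧ ord v ≤ ord z)) := by
  obtain ⟨l₁, l₂, l₃, hdec⟩ := split2 hp ha hz haz
  have hp' := hdec ▸ hp
  rw [List.pairwise_append] at hp'
  obtain ⟨-, hp2, h1⟩ := hp'
  rw [List.pairwise_cons] at hp2
  obtain ⟨hA, hp3⟩ := hp2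
  rw [List.pairwise_append] at hp3
  obtain ⟨-, hp4, h2⟩ := hp3
  rw [List.pairwise_cons] at hp4
  obtain ⟨h3, -⟩ := hp4
  have ha1 : a ∉ l₁ := fun h => absurd (h1 a h a (by simp)) (by omega)
  have hanez : a ≠ z := fun h => by rw [h] at haz; omega
  have hz2 : z ∉ l₂ := fun h => absurd (h2 z h z (by simp)) (by omega)
  have hseg : segment p a z = a :: (l₂ ++ [z]) := segment_eq hdec ha1 hanez hz2
  have hinfix : p = l₁ ++ (a :: (l₂ ++ [z])) ++ l₃ := by simp [hdec]
  have hmem : ∀ w, w ∈ segment p a z ↔ w ∈ p ∧ ord a ≤ ord w ∧ ord w ≤ ord z := by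
    intro w
    rw [hseg]
    constructor
    · intro hw
      rcases List.mem_cons.mp hw with rfl | hw
      · exact ⟨ha, le_refl _, le_of_lt haz⟩
      rcases List.mem_append.mp hw with hw | hw
      · exact ⟨by simp [hdec, hw], le_of_lt (hA w (by simp [hw])), le_of_lt (h2 w hw z (by simp))⟩
      · obtain rfl := List.mem_singleton.mp hw
        exact ⟨hz, le_of_lt haz, le_refl _⟩
    · rintro ⟨hwp, hw1, hw2⟩
      rw [hdec] at hwp
      simp only [List.mem_append, List.mem_cons] at hwp
      rcases hwp with hw | rfl | hw | rfl | hw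
      · exact absurd (h1 w hw a (by simp)) (by omega)
      · simp
      · simp [hw]
      · simp
      · exact absurd (h3 w hw) (by omega)
  refine ⟨by rw [hseg]; rfl, by rw [hseg, ← List.cons_append]; exact List.getLast?_concat, hmem, ?_⟩
  intro u v
  constructor
  · intro he
    refine ⟨edgesOf_infix hinfix (hseg ▸ he), ?_, ?_⟩
    · exact ((hmem u).mp (fst_mem_of_edge he)).2.1
    · exact ((hmem v).mp (snd_mem_of_edge he)).2.2
  · rintro ⟨he, hu, hv⟩
    have huv : ord u < ord v := pairwise_of_edge hp he
    have hu' : u ∈ segment p a z := (hmem u).mpr ⟨fst_mem_of_edge he, hu, by omega⟩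
    have hv' : v ∈ segment p a z := (hmem v).mpr ⟨snd_mem_of_edge he, by omega, hv⟩
    obtain ⟨s₁, s₂, hs⟩ := List.append_of_mem hu'
    cases s₂ with
    | nil =>
      exfalso
      have hlast : (segment p a z).getLast? = some u := by
        rw [hs]; exact List.getLast?_concat
      rw [hseg, ← List.cons_append, List.getLast?_concat] at hlast
      obtain rfl : z = u := by injection hlast
      omega
    | cons w s₂' =>
      have hw : (u, w) ∈ edgesOf (segment p a z) := mem_edgesOf.mpr ⟨s₁, s₂', hs⟩
      have hwp : (u, w) ∈ edgesOf p := edgesOf_infix hinfix (hseg ▸ hw)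
      have hnd : p.Nodup := hp.imp fun h => ne_of_apply_ne ord (Nat.ne_of_lt h)
      rwa [succ_unique hnd hwp he] at hw

theorem exists_block {c : List V} (hc : c.Pairwise (fun u v => ord u < ord v))
    {u v : V} (huv : ord u < ord v)
    (hpred : ∀ x ∈ c, ord x ≤ ord u ∨ ord v ≤ ord x) :
    ∀ x₀ ∈ c, ∀ y₀ ∈ c, ord x₀ ≤ ord u → ord v ≤ ord y₀ →
    ∃ a z : V, (a, z) ∈ edgesOf c ∧ ord a ≤ ord u ∧ ord v ≤ ord z := by
  induction c with
  | nil => intro x₀ hx; cases hx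
  | cons b rest ih =>
    intro x₀ hx y₀ hy hxu hvy
    rw [List.pairwise_cons] at hc
    obtain ⟨hb, hc'⟩ := hc
    have hbu : ord b ≤ ord u := by
      rcases List.mem_cons.mp hx with rfl | hx'
      · exact hxu
      · exact le_of_lt (lt_of_lt_of_le (hb _ hx') hxu)
    cases rest with
    | nil =>
      exfalso
      obtain rfl : y₀ = b := by simpa using hy
      omega
    | cons y rest' =>
      by_cases h : ord y ≤ ord u
      · have hy' : y₀ ∈ y :: rest' := by
          rcases List.mem_cons.mp hy with rfl | hy'
          · exfalso; omega
          · exact hy'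
        obtain ⟨a, z, hmem, h1, h2⟩ :=
          ih hc' (fun x hx' => hpred x (by simp [hx'])) y (by simp) y₀ hy' h hvy
        exact ⟨a, z, by rw [edgesOf_cons]; exact List.mem_cons_of_mem _ hmem, h1, h2⟩
      · have hvy' : ord v ≤ ord y := by
          rcases hpred y (by simp) with h' | h'
          · omega
          · exact h'
        exact ⟨b, y, by rw [edgesOf_cons]; simp, hbu, hvy'⟩

theorem gap {c : List V} (hc : c.Pairwise (fun u v => ord u < ord v)) {a z x : V}
    (hb : (a, z) ∈ edgesOf c) (hx : x ∈ c)
    (h1 : ord a ≤ ord x) (h2 : ord x ≤ ord z) : x = a ∨ x = z := by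
  obtain ⟨c₁, c₂, rfl⟩ := mem_edgesOf.mp hb
  rw [List.pairwise_append] at hc
  obtain ⟨-, hc2, hfr⟩ := hc
  rw [List.pairwise_cons] at hc2
  obtain ⟨ha', hc3⟩ := hc2
  rw [List.pairwise_cons] at hc3
  obtain ⟨hz', -⟩ := hc3
  simp only [List.mem_append, List.mem_cons] at hx
  rcases hx with hx | rfl | rfl | hx
  · exact absurd (hfr x hx a (by simp)) (by omega)
  · exact Or.inl rfl
  · exact Or.inr rfl
  · exact absurd (hz' x hx) (by omega)

theorem ord_inj {c : List V} (hc : c.Pairwise (fun u v => ord u < ord v))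
    {x y : V} (hx : x ∈ c) (hy : y ∈ c) (h : ord x = ord y) : x = y := by
  induction c with
  | nil => cases hx
  | cons b rest ih =>
    rw [List.pairwise_cons] at hc
    rcases List.mem_cons.mp hx with rfl | hx'
    · rcases List.mem_cons.mp hy with rfl | hy'
      · rfl
      · exact absurd (hc.1 y hy') (by omega)
    · rcases List.mem_cons.mp hy with rfl | hy'
      · exact absurd (hc.1 x hx') (by omega)
      · exact ih hc.2 hx' hy'

theorem adj {p : List V} (hp : p.Pairwise (fun u v => ord u < ord v)) {u v : V}
    (he : (u, v) ∈ edgesOf p) : ∀ x ∈ p, ord x ≤ ord u ∨ ord v ≤ ord x := by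
  obtain ⟨l₁, l₂, rfl⟩ := mem_edgesOf.mp he
  rw [List.pairwise_append] at hp
  obtain ⟨-, hp2, hfr⟩ := hp
  rw [List.pairwise_cons] at hp2
  obtain ⟨hu', hp3⟩ := hp2
  rw [List.pairwise_cons] at hp3
  obtain ⟨hv', -⟩ := hp3
  intro x hx
  simp only [List.mem_append, List.mem_cons] at hx
  rcases hx with hx | rfl | rfl | hx
  · exact Or.inl (le_of_lt (hfr x hx u (by simp)))
  · exact Or.inl (le_refl _)
  · exact Or.inr (le_refl _)
  · exact Or.inr (le_of_lt (hv' x hx))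

theorem pairwise_of_edges {p : List V} (h : ∀ e ∈ edgesOf p, ord e.1 < ord e.2) :
    p.Pairwise fun u v => ord u < ord v := by
  induction p with
  | nil => exact List.Pairwise.nil
  | cons a l ih =>
    rw [List.pairwise_cons]
    cases l with
    | nil => simp
    | cons b l' =>
      have hab : ord a < ord b := h (a, b) (by rw [edgesOf_cons]; simp)
      have hl : (b :: l').Pairwise fun u v => ord u < ord v :=
        ih fun e he => h e (by rw [edgesOf_cons]; exact List.mem_cons_of_mem _ he)
      refine ⟨fun y hy => ?_, hl⟩
      rcases List.mem_cons.mp hy with rfl | hy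
      · exact hab
      · exact lt_trans hab ((List.pairwise_cons.mp hl).1 y hy)

theorem exists_eq_append_singleton {p : List V} {t : V} (h : p.getLast? = some t) :
    ∃ l, p = l ++ [t] := by
  induction p using List.reverseRecOn with
  | nil => cases h
  | append_singleton l a _ =>
    rw [List.getLast?_concat] at h
    exact ⟨l, by injection h with h'; rw [h']⟩


theorem exists_eq_cons {p : List V} {s : V} (h : p.head? = some s) : ∃ r, p = s :: r := by
  cases p with
  | nil => cases h
  | cons a r => exact ⟨r, by injection h with h'; rw [h']⟩

theorem head_min {p : List V} (hp : p.Pairwise (fun u v => ord u < ord v)) {s : V}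
    (h : p.head? = some s) : ∀ y ∈ p, ord s ≤ ord y := by
  obtain ⟨r, rfl⟩ := exists_eq_cons h
  intro y hy
  rcases List.mem_cons.mp hy with rfl | hy'
  · exact le_refl _
  · exact le_of_lt ((List.pairwise_cons.mp hp).1 y hy')

theorem last_max {p : List V} (hp : p.Pairwise (fun u v => ord u < ord v)) {t : V}
    (h : p.getLast? = some t) : ∀ y ∈ p, ord y ≤ ord t := by
  obtain ⟨l, rfl⟩ := exists_eq_append_singleton h
  intro y hy
  rcases List.mem_append.mp hy with hy' | hy'
  · exact le_of_lt ((List.pairwise_append.mp hp).2.2 y hy' t (by simp))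
  · obtain rfl := List.mem_singleton.mp hy'
    exact le_refl _

theorem unique_block {p q c : List V}
    (hp : p.Pairwise (fun u v => ord u < ord v))
    (hq : q.Pairwise (fun u v => ord u < ord v))
    (hc : c.Pairwise (fun u v => ord u < ord v))
    (hcp : ∀ x ∈ c, x ∈ p) (hcq : ∀ x ∈ c, x ∈ q)
    {s t : V} (hs : s ∈ c) (ht : t ∈ c)
    (hsmin : ∀ y ∈ p, ord s ≤ ord y) (htmax : ∀ y ∈ p, ord y ≤ ord t)
    {u v : V} (hep : (u, v) ∈ edgesOf p) (henq : (u, v) ∉ edgesOf q) :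
    ∃! b : V × V, b ∈ edgesOf c ∧
      ((u, v) ∈ edgesOf (segment p b.1 b.2) ∨ (u, v) ∈ edgesOf (segment q b.1 b.2)) := by
  have huv : ord u < ord v := pairwise_of_edge hp hep
  have hup : u ∈ p := fst_mem_of_edge hep
  have hvp : v ∈ p := snd_mem_of_edge hep
  have hpred : ∀ x ∈ c, ord x ≤ ord u ∨ ord v ≤ ord x :=
    fun x hx => adj hp hep x (hcp x hx)
  obtain ⟨a, z, hb, hau, hvz⟩ :=
    exists_block hc huv hpred s hs t ht (hsmin u hup) (htmax v hvp)
  have haz : ord a < ord z := by omega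
  have hbmem : ∀ b1 b2 : V, (b1, b2) ∈ edgesOf c →
      b1 ∈ p ∧ b1 ∈ q ∧ b2 ∈ p ∧ b2 ∈ q ∧ ord b1 < ord b2 := by
    intro b1 b2 hb'
    have h1 := fst_mem_of_edge hb'
    have h2 := snd_mem_of_edge hb'
    exact ⟨hcp _ h1, hcq _ h1, hcp _ h2, hcq _ h2, pairwise_of_edge hc hb'⟩
  obtain ⟨hap, haq, hzp, hzq, -⟩ := hbmem a z hb
  refine ⟨(a, z), ⟨hb, Or.inl (((segment_spec hp hap hzp haz).2.2.2 u v).mpr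
    ⟨hep, hau, hvz⟩)⟩, ?_⟩
  rintro ⟨a', z'⟩ ⟨hb', hmem'⟩
  obtain ⟨ha'p, ha'q, hz'p, hz'q, ha'z'⟩ := hbmem a' z' hb'
  have hbounds : ord a' ≤ ord u ∧ ord v ≤ ord z' := by
    rcases hmem' with hm | hm
    · have := ((segment_spec hp ha'p hz'p ha'z').2.2.2 u v).mp hm
      exact ⟨this.2.1, this.2.2⟩
    · exact absurd (((segment_spec hq ha'q hz'q ha'z').2.2.2 u v).mp hm).1 henq
  obtain ⟨ha'u, hvz'⟩ := hbounds
  have ha'c : a' ∈ c := fst_mem_of_edge hb'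
  have hac : a ∈ c := fst_mem_of_edge hb
  have haa' : a' = a := by
    rcases lt_trichotomy (ord a) (ord a') with h | h | h
    · rcases gap hc hb ha'c (le_of_lt h) (by omega) with rfl | rfl
      · omega
      · omega
    · exact ord_inj hc ha'c hac h.symm
    · rcases gap hc hb' hac (le_of_lt h) (by omega) with rfl | rfl
      · omega
      · omega
  subst haa'
  have hcnd : c.Nodup := hc.imp fun h => ne_of_apply_ne ord (Nat.ne_of_lt h)
  have : z' = z := succ_unique hcnd hb' hb
  rw [this]

end FlowUpdate.Aux

open FlowUpdate in
/-- For an update flow pair whose union is a DAG, the edge sets of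
the blocks partition the symmetric difference of the edge sets of the old and
the update path: every edge lying on exactly one of the two paths belongs to
exactly one block; moreover within each block the old and update paths are
internally vertex-disjoint paths from the start of the block to its end. -/
theorem stmt13 {V : Type} [DecidableEq V] {k : ℕ} (G : UFN V k)
    (hWF : G.WellFormed) (i : Fin k) :
    (∀ e : V × V,
      ((e ∈ edgesOf (G.old i) ∧ e ∉ edgesOf (G.new i)) ∨
       (e ∈ edgesOf (G.new i) ∧ e ∉ edgesOf (G.old i))) →
      ∃! b : V × V, G.IsBlock i b ∧
        (e ∈ edgesOf (segment (G.old i) b.1 b.2) ∨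
         e ∈ edgesOf (segment (G.new i) b.1 b.2))) ∧
    (∀ a z : V, G.IsBlock i (a, z) →
      (segment (G.old i) a z).head? = some a ∧
      (segment (G.old i) a z).getLast? = some z ∧
      (segment (G.new i) a z).head? = some a ∧
      (segment (G.new i) a z).getLast? = some z ∧
      ∀ v ∈ segment (G.old i) a z, v ∈ segment (G.new i) a z → v = a ∨ v = z) := by
  obtain ⟨hpaths, hords, -, -, -⟩ := hWF
  obtain ⟨ord, hord⟩ := hords i
  obtain ⟨⟨hph, hpl, hpnd⟩, hqh, hql, hqnd⟩ := hpaths i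
  have hp : (G.old i).Pairwise (fun u v => ord u < ord v) :=
    Aux.pairwise_of_edges fun e he => hord e (List.mem_append_left _ he)
  have hq : (G.new i).Pairwise (fun u v => ord u < ord v) :=
    Aux.pairwise_of_edges fun e he => hord e (List.mem_append_right _ he)
  have hcsub : (G.commons i).Sublist (G.old i) := List.filter_sublist
  have hc : (G.commons i).Pairwise (fun u v => ord u < ord v) :=
    List.Pairwise.sublist hcsub hp
  have hmemc : ∀ x, x ∈ G.commons i ↔ x ∈ G.old i ∧ x ∈ G.new i := by
    intro x
    simp [UFN.commons, List.mem_filter]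
  have hs_old : G.s ∈ G.old i := by
    obtain ⟨r, hr⟩ := Aux.exists_eq_cons hph; rw [hr]; simp
  have hs_new : G.s ∈ G.new i := by
    obtain ⟨r, hr⟩ := Aux.exists_eq_cons hqh; rw [hr]; simp
  have ht_old : G.t ∈ G.old i := by
    obtain ⟨l, hl⟩ := Aux.exists_eq_append_singleton hpl; rw [hl]; simp
  have ht_new : G.t ∈ G.new i := by
    obtain ⟨l, hl⟩ := Aux.exists_eq_append_singleton hql; rw [hl]; simp
  have hsc : G.s ∈ G.commons i := (hmemc _).mpr ⟨hs_old, hs_new⟩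
  have htc : G.t ∈ G.commons i := (hmemc _).mpr ⟨ht_old, ht_new⟩
  have hcp : ∀ x ∈ G.commons i, x ∈ G.old i := fun x hx => ((hmemc x).mp hx).1
  have hcq : ∀ x ∈ G.commons i, x ∈ G.new i := fun x hx => ((hmemc x).mp hx).2
  constructor
  · rintro ⟨u, v⟩ (⟨hep, henq⟩ | ⟨heq, henp⟩)
    · exact Aux.unique_block hp hq hc hcp hcq hsc htc
        (Aux.head_min hp hph) (Aux.last_max hp hpl) hep henq
    · obtain ⟨b, ⟨hb1, hb2⟩, hbu⟩ := Aux.unique_block hq hp hc hcq hcp hsc htc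
        (Aux.head_min hq hqh) (Aux.last_max hq hql) heq henp
      exact ⟨b, ⟨hb1, hb2.symm⟩, fun b' hb' => hbu b' ⟨hb'.1, hb'.2.symm⟩⟩
  · intro a z hb
    have hb' : (a, z) ∈ edgesOf (G.commons i) := hb
    have hac := Aux.fst_mem_of_edge hb'
    have hzc := Aux.snd_mem_of_edge hb'
    have hap := hcp a hac
    have haq := hcq a hac
    have hzp := hcp z hzc
    have hzq := hcq z hzc
    have haz : ord a < ord z := Aux.pairwise_of_edge hc hb'
    obtain ⟨h1, h2, hm1, -⟩ := Aux.segment_spec hp hap hzp haz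
    obtain ⟨h3, h4, hm2, -⟩ := Aux.segment_spec hq haq hzq haz
    refine ⟨h1, h2, h3, h4, ?_⟩
    intro w hw1 hw2
    have hw1' := (hm1 w).mp hw1
    have hw2' := (hm2 w).mp hw2
    have hwc : w ∈ G.commons i := (hmemc w).mpr ⟨hw1'.1, hw2'.1⟩
    exact Aux.gap hc hb' hwc hw1'.2.1 hw1'.2.2
end
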